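/- arXiv:2202.09809 — 6 statements merged into one kernel-verified Lean document; each statement's English description precedes it below -/
import Mathlib

section
/- Let X := {(l,k) ∈ ℕ × ℕ : k < 2^l} and let ℓ²(X) be the Hilbert space of square-summable complex functions on X, with standard orthonormal basis (δ_{(l,k)}). For f ∈ C([0,1], ℂ) let π(f) and ρ(f) be the unique bounded operators on ℓ²(X) satisfying π(f)δ_{(l,k)} = f(k·2^{-l})·δ_{(l,k)} and ρ(f)δ_{(l,k)} = f((k+1)·2^{-l})·δ_{(l,k)} for all (l,k) ∈ X (these exist since the diagonal entries are bounded by the sup-norm of f). Then π and ρ are unital *-homomorphisms from C([0,1], ℂ) to B(ℓ²(X)), and for every f ∈ C([0,1], ℂ) the difference π(f) − ρ(f) is a compact operator on ℓ²(X). -/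
/-- The dyadic index set `X = {(l,k) ∈ ℕ × ℕ : k < 2^l}`. -/
def DyadicX : Type := {p : ℕ × ℕ // p.2 < 2 ^ p.1}

noncomputable instance : DecidableEq DyadicX := fun _ _ => Classical.dec _

/-- The dyadic point `k·2⁻ˡ ∈ [0,1]` associated to `(l,k) ∈ X`. -/
noncomputable def dyadicNodeL (x : DyadicX) : Set.Icc (0 : ℝ) 1 :=
  ⟨(x.1.2 : ℝ) / 2 ^ x.1.1, by
    constructor
    · positivity
    · rw [div_le_one (by positivity)]
      exact_mod_cast (Nat.cast_le.mpr x.2.le).trans_eq (by push_cast; ring)⟩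

/-- The dyadic point `(k+1)·2⁻ˡ ∈ [0,1]` associated to `(l,k) ∈ X`. -/
noncomputable def dyadicNodeR (x : DyadicX) : Set.Icc (0 : ℝ) 1 :=
  ⟨((x.1.2 : ℝ) + 1) / 2 ^ x.1.1, by
    constructor
    · positivity
    · rw [div_le_one (by positivity)]
      have : (x.1.2 + 1 : ℕ) ≤ 2 ^ x.1.1 := x.2
      exact_mod_cast (Nat.cast_le.mpr this).trans_eq (by push_cast; ring)⟩

/-- `ℓ²(X)` for the dyadic index set. -/
noncomputable abbrev l2DyadicX := lp (fun _ : DyadicX => ℂ) 2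

open scoped ENNReal Topology

set_option maxHeartbeats 1000000

namespace DyProof
noncomputable abbrev Hs := l2DyadicX
noncomputable abbrev As := lp (fun _ : DyadicX => ℂ) ∞

lemma lp_norm_le (F f : Hs) {C : ℝ} (hC : 0 ≤ C) (h : ∀ i, ‖F i‖ ≤ C * ‖f i‖) :
    ‖F‖ ≤ C * ‖f‖ := by
  have hp : (0:ℝ) < (2:ℝ≥0∞).toReal := by norm_num
  apply lp.norm_le_of_tsum_le hp (mul_nonneg hC (norm_nonneg f))
  have hsf : Summable fun i => ‖f i‖ ^ (2:ℝ≥0∞).toReal := (lp.memℓp f).summable hp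
  calc ∑' i, ‖F i‖ ^ (2:ℝ≥0∞).toReal
      ≤ ∑' i, C ^ (2:ℝ≥0∞).toReal * ‖f i‖ ^ (2:ℝ≥0∞).toReal := by
        refine Summable.tsum_le_tsum (fun i => ?_) ((lp.memℓp F).summable hp) (hsf.mul_left _)
        rw [← Real.mul_rpow hC (norm_nonneg _)]
        exact Real.rpow_le_rpow (norm_nonneg _) (h i) hp.le
    _ = (C * ‖f‖) ^ (2:ℝ≥0∞).toReal := by
        rw [tsum_mul_left, ← lp.norm_rpow_eq_tsum hp,
          Real.mul_rpow hC (norm_nonneg _)]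

lemma memℓp_mul (d : DyadicX → ℂ) {C : ℝ} (hC : 0 ≤ C) (hd : ∀ i, ‖d i‖ ≤ C) (f : Hs) :
    Memℓp (fun i => d i * f i) 2 := by
  have hp : (0:ℝ) < (2:ℝ≥0∞).toReal := by norm_num
  apply memℓp_gen
  have hsf : Summable fun i => ‖f i‖ ^ (2:ℝ≥0∞).toReal := (lp.memℓp f).summable hp
  refine Summable.of_nonneg_of_le (fun i => by positivity) (fun i => ?_)
    (hsf.mul_left (C ^ (2:ℝ≥0∞).toReal))
  rw [← Real.mul_rpow hC (norm_nonneg _)]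
  refine Real.rpow_le_rpow (norm_nonneg _) ?_ hp.le
  rw [norm_mul]
  exact mul_le_mul_of_nonneg_right (hd i) (norm_nonneg _)

/-- diagonal linear map -/
noncomputable def diagL (d : As) : Hs →ₗ[ℂ] Hs where
  toFun f := ⟨fun i => d i * f i,
    memℓp_mul d (norm_nonneg d) (fun i => lp.norm_apply_le_norm ENNReal.top_ne_zero d i) f⟩
  map_add' f g := lp.ext <| funext fun i => by
    simp only [lp.coeFn_add, Pi.add_apply, mul_add]
  map_smul' c f := lp.ext <| funext fun i => by
    simp only [lp.coeFn_smul, Pi.smul_apply, smul_eq_mul, RingHom.id_apply]; ring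

@[simp] lemma diagL_apply (d : As) (f : Hs) (i : DyadicX) :
    (diagL d f : DyadicX → ℂ) i = d i * f i := rfl

lemma diagL_norm (d : As) (f : Hs) : ‖diagL d f‖ ≤ ‖d‖ * ‖f‖ :=
  lp_norm_le _ f (norm_nonneg d) fun i => by
    rw [diagL_apply, norm_mul]
    exact mul_le_mul_of_nonneg_right (lp.norm_apply_le_norm ENNReal.top_ne_zero d i)
      (norm_nonneg _)

/-- diagonal operator -/
noncomputable def Dop (d : As) : Hs →L[ℂ] Hs :=
  LinearMap.mkContinuous (diagL d) ‖d‖ (diagL_norm d)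

@[simp] lemma Dop_apply (d : As) (f : Hs) (i : DyadicX) :
    (Dop d f : DyadicX → ℂ) i = d i * f i := rfl
open scoped ComplexConjugate

@[simp] lemma Dop_single (d : As) (x : DyadicX) :
    Dop d (lp.single 2 x (1:ℂ)) = d x • lp.single 2 x (1:ℂ) := by
  apply lp.ext
  funext i
  rw [lp.coeFn_smul, Pi.smul_apply, Dop_apply]
  by_cases h : i = x
  · subst h
    rw [lp.single_apply_self, smul_eq_mul]
  · rw [lp.single_apply_ne 2 x _ h, smul_eq_mul, mul_zero, mul_zero]

lemma Dop_one : Dop (1 : As) = 1 := by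
  ext f : 1
  apply lp.ext; funext i
  rw [ContinuousLinearMap.one_apply, Dop_apply, lp.infty_coeFn_one, Pi.one_apply, one_mul]

lemma Dop_mul (d e : As) : Dop (d * e) = Dop d * Dop e := by
  ext f : 1
  apply lp.ext; funext i
  rw [ContinuousLinearMap.mul_apply, Dop_apply, Dop_apply, Dop_apply, lp.infty_coeFn_mul,
    Pi.mul_apply, mul_assoc]

lemma Dop_add (d e : As) : Dop (d + e) = Dop d + Dop e := by
  ext f : 1
  apply lp.ext; funext i
  rw [ContinuousLinearMap.add_apply, Dop_apply, lp.coeFn_add, Pi.add_apply, add_mul,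
    lp.coeFn_add, Pi.add_apply, Dop_apply, Dop_apply]

lemma Dop_algebraMap (c : ℂ) : Dop (algebraMap ℂ As c) = algebraMap ℂ (Hs →L[ℂ] Hs) c := by
  ext f : 1
  apply lp.ext; funext i
  rw [Algebra.algebraMap_eq_smul_one, Algebra.algebraMap_eq_smul_one,
    ContinuousLinearMap.smul_apply, ContinuousLinearMap.one_apply,
    lp.coeFn_smul, Pi.smul_apply, Dop_apply, lp.coeFn_smul, Pi.smul_apply,
    lp.infty_coeFn_one, Pi.one_apply, smul_eq_mul, smul_eq_mul, mul_one]

lemma Dop_star (d : As) : Dop (star d) = star (Dop d) := by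
  rw [ContinuousLinearMap.star_eq_adjoint]
  rw [ContinuousLinearMap.eq_adjoint_iff]
  intro x y
  rw [lp.inner_eq_tsum, lp.inner_eq_tsum]
  apply tsum_congr
  intro i
  rw [RCLike.inner_apply, RCLike.inner_apply, Dop_apply, Dop_apply, lp.coeFn_star,
    Pi.star_apply, RCLike.star_def, map_mul, starRingEnd_apply, starRingEnd_apply,
    starRingEnd_apply, star_star]
  ring

/-- The diagonal representation as a star algebra homomorphism. -/
noncomputable def Diag : As →⋆ₐ[ℂ] (Hs →L[ℂ] Hs) where
  toFun := Dop
  map_one' := Dop_one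
  map_mul' := Dop_mul
  map_zero' := by simpa using Dop_algebraMap 0
  map_add' := Dop_add
  commutes' := Dop_algebraMap
  map_star' := Dop_star


abbrev I01 := Set.Icc (0:ℝ) 1

lemma memℓp_comp (node : DyadicX → I01) (f : C(I01, ℂ)) :
    Memℓp (fun i => f (node i)) ∞ :=
  memℓp_infty ⟨‖f‖, by rintro - ⟨i, rfl⟩; exact f.norm_coe_le_norm _⟩

/-- Composition with a map into `[0,1]` as a star algebra homomorphism. -/
noncomputable def compNode (node : DyadicX → I01) : C(I01, ℂ) →⋆ₐ[ℂ] As where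
  toFun f := ⟨fun i => f (node i), memℓp_comp node f⟩
  map_one' := lp.ext rfl
  map_mul' f g := lp.ext rfl
  map_zero' := lp.ext rfl
  map_add' f g := lp.ext rfl
  commutes' c := lp.ext rfl
  map_star' f := lp.ext rfl

@[simp] lemma compNode_apply (node : DyadicX → I01) (f : C(I01, ℂ)) (i : DyadicX) :
    (compNode node f : DyadicX → ℂ) i = f (node i) := rfl


/-- Evaluation at a coordinate as a continuous linear functional. -/
noncomputable def evalCLM (i : DyadicX) : Hs →L[ℂ] ℂ :=
  LinearMap.mkContinuous
    { toFun := fun f => f i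
      map_add' := fun f g => by simpa using congrFun (lp.coeFn_add f g) i
      map_smul' := fun c f => by simpa using congrFun (lp.coeFn_smul c f) i }
    1 (fun f => by rw [one_mul]; exact lp.norm_apply_le_norm (by norm_num : (2:ℝ≥0∞) ≠ 0) f i)

@[simp] lemma evalCLM_apply (i : DyadicX) (f : Hs) : evalCLM i f = f i := rfl

lemma isCompactOperator_smulRight (φ : Hs →L[ℂ] ℂ) (v : Hs) :
    IsCompactOperator ⇑(φ.smulRight v) := by
  have h1 : IsCompactOperator fun z : ℂ => z • v := by
    refine ⟨(fun z : ℂ => z • v) '' Metric.closedBall 0 1,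
      ((isCompact_closedBall 0 1).image (continuous_id.smul continuous_const)), ?_⟩
    exact Filter.mem_of_superset (Metric.closedBall_mem_nhds 0 one_pos)
      (Set.subset_preimage_image _ _)
  exact h1.comp_clm φ

/-- Finite-rank truncation of the diagonal operator. -/
noncomputable def Trunc (d : As) (s : Finset DyadicX) : Hs →L[ℂ] Hs :=
  ∑ i ∈ s, (evalCLM i).smulRight (d i • lp.single 2 i (1:ℂ))

lemma Trunc_isCompact (d : As) (s : Finset DyadicX) : IsCompactOperator ⇑(Trunc d s) := by
  classical
  unfold Trunc
  induction s using Finset.cons_induction with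
  | empty => simpa using isCompactOperator_zero
  | cons i s hi ih =>
    rw [Finset.sum_cons, ContinuousLinearMap.coe_add']
    exact (isCompactOperator_smulRight _ _).add ih

lemma Trunc_apply (d : As) (s : Finset DyadicX) (f : Hs) (j : DyadicX) :
    (Trunc d s f : DyadicX → ℂ) j = if j ∈ s then d j * f j else 0 := by
  classical
  rw [Trunc, ContinuousLinearMap.sum_apply, lp.coeFn_sum, Finset.sum_apply]
  have : ∀ i ∈ s, ((evalCLM i).smulRight (d i • lp.single 2 i (1:ℂ)) f : DyadicX → ℂ) j
      = if i = j then d j * f j else 0 := by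
    intro i _
    rw [ContinuousLinearMap.smulRight_apply, evalCLM_apply, lp.coeFn_smul, Pi.smul_apply,
      lp.coeFn_smul, Pi.smul_apply]
    by_cases h : i = j
    · subst h
      rw [lp.single_apply_self, if_pos rfl, smul_eq_mul, smul_eq_mul, mul_one]
      ring
    · rw [lp.single_apply_ne 2 i _ (Ne.symm h), if_neg h, smul_zero, smul_zero]
  rw [Finset.sum_congr rfl this, Finset.sum_ite_eq' s j (fun _ => d j * f j)]

lemma norm_sub_Trunc_le (d : As) {ε : ℝ} (hε : 0 ≤ ε) (s : Finset DyadicX)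
    (hs : ∀ i ∉ s, ‖d i‖ ≤ ε) : ‖Dop d - Trunc d s‖ ≤ ε := by
  refine ContinuousLinearMap.opNorm_le_bound _ hε fun f => ?_
  refine lp_norm_le _ f hε fun i => ?_
  rw [ContinuousLinearMap.sub_apply, lp.coeFn_sub, Pi.sub_apply, Dop_apply, Trunc_apply]
  by_cases h : i ∈ s
  · rw [if_pos h, sub_self, norm_zero]
    positivity
  · rw [if_neg h, sub_zero, norm_mul]
    exact mul_le_mul_of_nonneg_right (hs i h) (norm_nonneg _)

lemma isCompactOperator_Dop (d : As) (hd : Filter.Tendsto (⇑d) Filter.cofinite (𝓝 0)) :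
    IsCompactOperator ⇑(Dop d) := by
  classical
  refine isCompactOperator_of_tendsto (l := (Filter.atTop : Filter (Finset DyadicX)))
    (F := fun s => Trunc d s) ?_ (Filter.Eventually.of_forall (Trunc_isCompact d))
  rw [Metric.tendsto_atTop]
  intro ε hε
  have hfin : {i : DyadicX | ¬ dist (d i) 0 < ε / 2}.Finite :=
    Filter.eventually_cofinite.mp (Metric.tendsto_nhds.mp hd (ε/2) (by linarith))
  refine ⟨hfin.toFinset, fun s hs => ?_⟩
  rw [dist_eq_norm]
  have hb : ‖Trunc d s - Dop d‖ ≤ ε / 2 := by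
    rw [norm_sub_rev]
    refine norm_sub_Trunc_le d (by linarith) s fun i hi => ?_
    have h1 : i ∉ hfin.toFinset := fun h => hi (hs h)
    rw [Set.Finite.mem_toFinset, Set.mem_setOf_eq, not_not, dist_zero_right] at h1
    exact h1.le
  linarith


end DyProof

namespace DyProof

lemma tendsto_diff (f : C(I01, ℂ)) :
    Filter.Tendsto (fun i : DyadicX => f (dyadicNodeL i) - f (dyadicNodeR i))
      Filter.cofinite (𝓝 0) := by
  rw [Metric.tendsto_nhds]
  intro ε hε
  rw [Filter.eventually_cofinite]
  have huc : UniformContinuous f := CompactSpace.uniformContinuous_of_continuous f.continuous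
  obtain ⟨δ, hδ, hd⟩ := Metric.uniformContinuous_iff.mp huc ε hε
  obtain ⟨N, hN⟩ : ∃ N : ℕ, ((1:ℝ)/2) ^ N < δ :=
    exists_pow_lt_of_lt_one hδ (by norm_num)
  apply Set.Finite.subset (Set.Finite.preimage
    (Set.injOn_of_injective Subtype.val_injective)
    (Set.finite_Iic ((N, 2^N) : ℕ × ℕ)))
  intro i hi
  have hl : i.1.1 ≤ N := by
    by_contra hlN
    push_neg at hlN
    apply hi
    have hdist : dist (dyadicNodeL i) (dyadicNodeR i) < δ := by
      rw [Subtype.dist_eq, Real.dist_eq]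
      have hv : ((dyadicNodeL i : ℝ) - (dyadicNodeR i : ℝ)) = -(1 / 2 ^ i.1.1) := by
        simp only [dyadicNodeL, dyadicNodeR]
        ring
      rw [hv, abs_neg, abs_of_pos (by positivity)]
      calc (1:ℝ)/2^i.1.1 = (1/2)^i.1.1 := by rw [div_pow, one_pow]
        _ ≤ (1/2)^N := pow_le_pow_of_le_one (by norm_num) (by norm_num) hlN.le
        _ < δ := hN
    rw [dist_zero_right, ← dist_eq_norm]
    exact hd hdist
  have hk : i.1.2 ≤ 2^N := le_trans i.2.le (Nat.pow_le_pow_right (by norm_num) hl)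
  show i.1 ∈ Set.Iic ((N, 2^N) : ℕ × ℕ)
  exact ⟨hl, hk⟩

end DyProof

open DyProof in
/-- **(From the proof of Theorem 1.9.)** The diagonal representations
`π, ρ : C([0,1],ℂ) → B(ℓ²(X))` determined on the standard basis by
`π(f) δ_{(l,k)} = f(k 2⁻ˡ) δ_{(l,k)}` and `ρ(f) δ_{(l,k)} = f((k+1) 2⁻ˡ) δ_{(l,k)}`
are unital `*`-homomorphisms, and `π(f) − ρ(f)` is compact for every `f`. -/
theorem stmt_2 :
    ∃ (P R : C(Set.Icc (0 : ℝ) 1, ℂ) →⋆ₐ[ℂ] (l2DyadicX →L[ℂ] l2DyadicX)),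
      (∀ (f : C(Set.Icc (0 : ℝ) 1, ℂ)) (x : DyadicX),
        P f (lp.single 2 x (1 : ℂ)) = f (dyadicNodeL x) • lp.single 2 x (1 : ℂ)) ∧
      (∀ (f : C(Set.Icc (0 : ℝ) 1, ℂ)) (x : DyadicX),
        R f (lp.single 2 x (1 : ℂ)) = f (dyadicNodeR x) • lp.single 2 x (1 : ℂ)) ∧
      (∀ f : C(Set.Icc (0 : ℝ) 1, ℂ), IsCompactOperator ⇑(P f - R f)) := by
  refine ⟨Diag.comp (compNode dyadicNodeL), Diag.comp (compNode dyadicNodeR),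
    fun f x => ?_, fun f x => ?_, fun f => ?_⟩
  · exact Dop_single (compNode dyadicNodeL f) x
  · exact Dop_single (compNode dyadicNodeR f) x
  · have h : Diag.comp (compNode dyadicNodeL) f - Diag.comp (compNode dyadicNodeR) f
        = Dop (compNode dyadicNodeL f - compNode dyadicNodeR f) := by
      exact (map_sub Diag _ _).symm
    rw [h]
    apply isCompactOperator_Dop
    have hc : ⇑(compNode dyadicNodeL f - compNode dyadicNodeR f)
        = fun i => f (dyadicNodeL i) - f (dyadicNodeR i) := by
      rw [lp.coeFn_sub]; rfl
    rw [hc]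
    exact tendsto_diff f
end

section
/- Let M be a unital C*-algebra and κ : M → M a *-automorphism. Let b₁, b₂ ∈ M, let s ∈ M be an isometry, and let r₁, r₂ ∈ M be isometries with κ(r₁) = r₁, κ(r₂) = r₂ and r₁r₁* + r₂r₂* = 1, such that b₁ commutes with r₁, r₂, r₁* and r₂*. Then the element u := (r₁r₁* + r₂ s r₂*)·s* + r₂(1 − ss*) is a unitary in M, and ‖u·b₂·κ(u)* − (r₁ b₁ r₁* + r₂ b₂ r₂*)‖ ≤ 5·max{ ‖s·b₁ − b₂·κ(s)‖ , ‖κ(s)·b₁* − b₂*·s‖ }. -/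
section O2Aux

variable {M : Type*} [CStarAlgebra M]

private lemma o2_isom_norm_le [Nontrivial M] {s : M} (hs : star s * s = 1) : ‖s‖ ≤ 1 := by
  have h : ‖s‖ * ‖s‖ = 1 := by rw [← CStarRing.norm_star_mul_self, hs, CStarRing.norm_one]
  nlinarith [norm_nonneg s]

private lemma o2_proj_norm_le {q : M} (hq : star q * q = q) : ‖q‖ ≤ 1 := by
  have h : ‖q‖ * ‖q‖ = ‖q‖ := by rw [← CStarRing.norm_star_mul_self, hq]
  nlinarith [norm_nonneg q]

private lemma o2_tri {X m Y : M} {c : ℝ} (hX : ‖X‖ ≤ 1) (hY : ‖Y‖ ≤ 1) (hm : ‖m‖ ≤ c) :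
    ‖X * m * Y‖ ≤ c := by
  have h1 := norm_mul_le (X * m) Y
  have h2 := norm_mul_le X m
  have h3 := norm_nonneg m
  have h4 := norm_nonneg X
  have h5 := norm_nonneg Y
  have h6 := norm_nonneg (X * m)
  nlinarith

private lemma o2_orth {r₁ r₂ : M} (hr₁ : star r₁ * r₁ = 1) (hr₂ : star r₂ * r₂ = 1)
    (hO₂ : r₁ * star r₁ + r₂ * star r₂ = 1) : star r₁ * r₂ = 0 := by
  have h : star r₁ * r₂ + star r₁ * r₂ = star r₁ * r₂ + 0 := by
    conv_rhs => rw [add_zero, ← one_mul r₂, ← hO₂]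
    simp only [add_mul, mul_add, mul_assoc, hr₂, mul_one]
    rw [← mul_assoc (star r₁) r₁, hr₁, one_mul]
  exact add_left_cancel h

private lemma o2_A_isom {s r₁ r₂ : M}
    (hs : star s * s = 1)
    (hr₁ : star r₁ * r₁ = 1) (hr₂ : star r₂ * r₂ = 1)
    (hO₂ : r₁ * star r₁ + r₂ * star r₂ = 1)
    (h12 : star r₁ * r₂ = 0) (h21 : star r₂ * r₁ = 0) :
    star (r₁ * star r₁ + r₂ * s * star r₂) * (r₁ * star r₁ + r₂ * s * star r₂) = 1 := by
  have hs' : ∀ x : M, star s * (s * x) = x := fun x => by rw [← mul_assoc, hs, one_mul]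
  have hr₁' : ∀ x : M, star r₁ * (r₁ * x) = x := fun x => by rw [← mul_assoc, hr₁, one_mul]
  have hr₂' : ∀ x : M, star r₂ * (r₂ * x) = x := fun x => by rw [← mul_assoc, hr₂, one_mul]
  have h12' : ∀ x : M, star r₁ * (r₂ * x) = 0 := fun x => by rw [← mul_assoc, h12, zero_mul]
  have h21' : ∀ x : M, star r₂ * (r₁ * x) = 0 := fun x => by rw [← mul_assoc, h21, zero_mul]
  simp only [star_add, star_mul, star_sub, star_one, star_star]
  simp only [mul_add, add_mul, mul_sub, sub_mul, mul_one, one_mul, mul_assoc,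
    hs, hr₁, hr₂, h12, h21, hs', hr₁', hr₂', h12', h21',
    zero_mul, mul_zero, add_zero, zero_add, sub_zero, zero_sub, sub_self]
  exact hO₂

private lemma o2_unitary {s r₁ r₂ : M}
    (hs : star s * s = 1)
    (hr₁ : star r₁ * r₁ = 1) (hr₂ : star r₂ * r₂ = 1)
    (hO₂ : r₁ * star r₁ + r₂ * star r₂ = 1)
    (h12 : star r₁ * r₂ = 0) (h21 : star r₂ * r₁ = 0) :
    (r₁ * star r₁ + r₂ * s * star r₂) * star s + r₂ * (1 - s * star s) ∈ unitary M := by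
  have hs' : ∀ x : M, star s * (s * x) = x := fun x => by rw [← mul_assoc, hs, one_mul]
  have hr₁' : ∀ x : M, star r₁ * (r₁ * x) = x := fun x => by rw [← mul_assoc, hr₁, one_mul]
  have hr₂' : ∀ x : M, star r₂ * (r₂ * x) = x := fun x => by rw [← mul_assoc, hr₂, one_mul]
  have h12' : ∀ x : M, star r₁ * (r₂ * x) = 0 := fun x => by rw [← mul_assoc, h12, zero_mul]
  have h21' : ∀ x : M, star r₂ * (r₁ * x) = 0 := fun x => by rw [← mul_assoc, h21, zero_mul]
  have hp : ∀ x : M, r₁ * (star r₁ * x) = x - r₂ * (star r₂ * x) := fun x => by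
    rw [← mul_assoc, ← mul_assoc, eq_sub_iff_add_eq, ← add_mul, hO₂, one_mul]
  rw [Unitary.mem_iff]
  constructor <;>
  · simp only [star_add, star_mul, star_sub, star_one, star_star]
    simp only [mul_add, add_mul, mul_sub, sub_mul, mul_one, one_mul, mul_assoc,
      hs, hr₁, hr₂, h12, h21, hs', hr₁', hr₂', h12', h21', hp, hO₂,
      zero_mul, mul_zero, add_zero, zero_add, sub_zero, zero_sub, sub_self]
    try abel
    try exact hO₂

private lemma o2_key (b₁ b₂ s t r₁ r₂ : M)
    (hs : star s * s = 1) (ht : star t * t = 1)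
    (hr₁ : star r₁ * r₁ = 1) (hr₂ : star r₂ * r₂ = 1)
    (h12 : star r₁ * r₂ = 0) (h21 : star r₂ * r₁ = 0)
    (hc₁ : b₁ * r₁ = r₁ * b₁) (hc₂ : b₁ * r₂ = r₂ * b₁)
    (hc₃ : b₁ * star r₁ = star r₁ * b₁) (hc₄ : b₁ * star r₂ = star r₂ * b₁) :
    ((r₁ * star r₁ + r₂ * s * star r₂) * star s + r₂ * (1 - s * star s)) * b₂ *
        (t * (r₁ * star r₁ + r₂ * star t * star r₂) + (1 - t * star t) * star r₂)
      - (r₁ * b₁ * star r₁ + r₂ * b₂ * star r₂)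
    = (r₁ * star r₁ + r₂ * s * star r₂) * (star s * (b₂ * t - s * b₁)) *
          (r₁ * star r₁ + r₂ * star t * star r₂)
      + r₂ * (s * b₁ - b₂ * t) * (star t * star r₂)
      + (r₁ * star r₁ + r₂ * s * star r₂) * (star s * b₂ - b₁ * star t) *
          ((1 - t * star t) * star r₂)
      + r₂ * ((1 - s * star s) * (b₂ * t - s * b₁)) *
          (r₁ * star r₁ + r₂ * star t * star r₂)
      + (r₂ * s) * (b₁ * star t - star s * b₂) * ((1 - t * star t) * star r₂) := by
  have hs' : ∀ x : M, star s * (s * x) = x := fun x => by rw [← mul_assoc, hs, one_mul]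
  have ht' : ∀ x : M, star t * (t * x) = x := fun x => by rw [← mul_assoc, ht, one_mul]
  have hr₁' : ∀ x : M, star r₁ * (r₁ * x) = x := fun x => by rw [← mul_assoc, hr₁, one_mul]
  have hr₂' : ∀ x : M, star r₂ * (r₂ * x) = x := fun x => by rw [← mul_assoc, hr₂, one_mul]
  have h12' : ∀ x : M, star r₁ * (r₂ * x) = 0 := fun x => by rw [← mul_assoc, h12, zero_mul]
  have h21' : ∀ x : M, star r₂ * (r₁ * x) = 0 := fun x => by rw [← mul_assoc, h21, zero_mul]
  have hc₁' : ∀ x : M, b₁ * (r₁ * x) = r₁ * (b₁ * x) := fun x => by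
    rw [← mul_assoc, hc₁, mul_assoc]
  have hc₂' : ∀ x : M, b₁ * (r₂ * x) = r₂ * (b₁ * x) := fun x => by
    rw [← mul_assoc, hc₂, mul_assoc]
  have hc₃' : ∀ x : M, b₁ * (star r₁ * x) = star r₁ * (b₁ * x) := fun x => by
    rw [← mul_assoc, hc₃, mul_assoc]
  have hc₄' : ∀ x : M, b₁ * (star r₂ * x) = star r₂ * (b₁ * x) := fun x => by
    rw [← mul_assoc, hc₄, mul_assoc]
  simp only [mul_add, add_mul, mul_sub, sub_mul, mul_one, one_mul, mul_assoc,
    hs, ht, hr₁, hr₂, h12, h21, hs', ht', hr₁', hr₂', h12', h21',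
    hc₁, hc₂, hc₃, hc₄, hc₁', hc₂', hc₃', hc₄',
    zero_mul, mul_zero, add_zero, zero_add, sub_zero, zero_sub]
  abel

private lemma o2_five {a b c d e : M} {x y : ℝ}
    (ha : ‖a‖ ≤ x) (hb : ‖b‖ ≤ x) (hc : ‖c‖ ≤ y) (hd : ‖d‖ ≤ x) (he : ‖e‖ ≤ y) :
    ‖a + b + c + d + e‖ ≤ 5 * max x y := by
  have h1 := norm_add_le (a + b + c + d) e
  have h2 := norm_add_le (a + b + c) d
  have h3 := norm_add_le (a + b) c
  have h4 := norm_add_le a b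
  have hx : x ≤ max x y := le_max_left _ _
  have hy : y ≤ max x y := le_max_right _ _
  linarith

end O2Aux

set_option maxHeartbeats 1000000 in
/-- **Lemma 3.9 (the `O₂`-sum lemma), norm estimate part.** -/
theorem stmt_4 {M : Type*} [CStarAlgebra M]
    (κ : M ≃⋆ₐ[ℂ] M) (b₁ b₂ s r₁ r₂ : M)
    (hs : star s * s = 1)
    (hr₁ : star r₁ * r₁ = 1) (hr₂ : star r₂ * r₂ = 1)
    (hκr₁ : κ r₁ = r₁) (hκr₂ : κ r₂ = r₂)
    (hO₂ : r₁ * star r₁ + r₂ * star r₂ = 1)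
    (hc₁ : b₁ * r₁ = r₁ * b₁) (hc₂ : b₁ * r₂ = r₂ * b₁)
    (hc₃ : b₁ * star r₁ = star r₁ * b₁) (hc₄ : b₁ * star r₂ = star r₂ * b₁) :
    (r₁ * star r₁ + r₂ * s * star r₂) * star s + r₂ * (1 - s * star s) ∈ unitary M ∧
      ‖((r₁ * star r₁ + r₂ * s * star r₂) * star s + r₂ * (1 - s * star s)) * b₂ *
            star (κ ((r₁ * star r₁ + r₂ * s * star r₂) * star s + r₂ * (1 - s * star s))) -
          (r₁ * b₁ * star r₁ + r₂ * b₂ * star r₂)‖ ≤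
        5 * max ‖s * b₁ - b₂ * κ s‖ ‖κ s * star b₁ - star b₂ * s‖ := by
  have h12 : star r₁ * r₂ = 0 := o2_orth hr₁ hr₂ hO₂
  have h21 : star r₂ * r₁ = 0 := by
    have := congrArg star h12
    simpa using this
  refine ⟨o2_unitary hs hr₁ hr₂ hO₂ h12 h21, ?_⟩
  rcases subsingleton_or_nontrivial M with hM | hM
  · have h0 : ∀ x : M, ‖x‖ = 0 := fun x => by rw [Subsingleton.elim x 0, norm_zero]
    simp [h0]
  · set t : M := κ s with htdef
    have ht : star t * t = 1 := by
      have := congrArg κ hs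
      simpa [map_mul, map_star, map_one] using this
    -- rewrite star (κ u)
    have hκu : star (κ ((r₁ * star r₁ + r₂ * s * star r₂) * star s + r₂ * (1 - s * star s))) =
        t * (r₁ * star r₁ + r₂ * star t * star r₂) + (1 - t * star t) * star r₂ := by
      have h1 : κ ((r₁ * star r₁ + r₂ * s * star r₂) * star s + r₂ * (1 - s * star s)) =
          (r₁ * star r₁ + r₂ * t * star r₂) * star t + r₂ * (1 - t * star t) := by
        simp [map_mul, map_add, map_sub, map_star, map_one, hκr₁, hκr₂]
        rfl
      rw [h1]
      simp only [star_add, star_mul, star_sub, star_one, star_star, mul_assoc, mul_add, add_mul,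
        mul_sub, sub_mul, mul_one, one_mul]
      try abel
    rw [hκu, o2_key b₁ b₂ s t r₁ r₂ hs ht hr₁ hr₂ h12 h21 hc₁ hc₂ hc₃ hc₄]
    -- norm bounds
    have hns : ‖s‖ ≤ 1 := o2_isom_norm_le hs
    have hnt : ‖t‖ ≤ 1 := o2_isom_norm_le ht
    have hnr₂ : ‖r₂‖ ≤ 1 := o2_isom_norm_le hr₂
    have hnA : ‖r₁ * star r₁ + r₂ * s * star r₂‖ ≤ 1 :=
      o2_isom_norm_le (o2_A_isom hs hr₁ hr₂ hO₂ h12 h21)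
    have hnA' : ‖r₁ * star r₁ + r₂ * star t * star r₂‖ ≤ 1 := by
      have h1 : r₁ * star r₁ + r₂ * star t * star r₂ =
          star (r₁ * star r₁ + r₂ * t * star r₂) := by
        simp [star_add, star_mul, star_star, mul_assoc]
      rw [h1, norm_star]
      exact o2_isom_norm_le (o2_A_isom ht hr₁ hr₂ hO₂ h12 h21)
    have hne : ‖(1 : M) - s * star s‖ ≤ 1 := by
      refine o2_proj_norm_le ?_
      have hs' : ∀ x : M, star s * (s * x) = x := fun x => by rw [← mul_assoc, hs, one_mul]
      simp only [star_sub, star_one, star_mul, star_star, sub_mul, mul_sub, one_mul, mul_one,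
        mul_assoc, hs']
      abel
    have hne' : ‖(1 : M) - t * star t‖ ≤ 1 := by
      refine o2_proj_norm_le ?_
      have ht' : ∀ x : M, star t * (t * x) = x := fun x => by rw [← mul_assoc, ht, one_mul]
      simp only [star_sub, star_one, star_mul, star_star, sub_mul, mul_sub, one_mul, mul_one,
        mul_assoc, ht']
      abel
    set ε₁ : ℝ := ‖s * b₁ - b₂ * t‖ with hε₁
    set ε₂ : ℝ := ‖t * star b₁ - star b₂ * s‖ with hε₂
    have hd₂ : ‖b₁ * star t - star s * b₂‖ = ε₂ := by
      rw [hε₂, ← norm_star (t * star b₁ - star b₂ * s)]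
      congr 1
      simp [star_sub, star_mul, star_star]
    have hd₁r : ‖b₂ * t - s * b₁‖ = ε₁ := by rw [hε₁, norm_sub_rev]
    -- five term bounds
    have hb1 : ‖(r₁ * star r₁ + r₂ * s * star r₂) * (star s * (b₂ * t - s * b₁)) *
        (r₁ * star r₁ + r₂ * star t * star r₂)‖ ≤ ε₁ := by
      refine o2_tri hnA hnA' ?_
      calc ‖star s * (b₂ * t - s * b₁)‖ ≤ ‖star s‖ * ‖b₂ * t - s * b₁‖ := norm_mul_le _ _
        _ ≤ 1 * ε₁ := by
            rw [hd₁r]; gcongr; rw [norm_star]; exact hns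
        _ = ε₁ := one_mul _
    have hb2 : ‖r₂ * (s * b₁ - b₂ * t) * (star t * star r₂)‖ ≤ ε₁ := by
      refine o2_tri hnr₂ ?_ le_rfl
      calc ‖star t * star r₂‖ ≤ ‖star t‖ * ‖star r₂‖ := norm_mul_le _ _
        _ ≤ 1 * 1 := by gcongr <;> rw [norm_star] <;> assumption
        _ = 1 := one_mul _
    have hYe : ‖((1 : M) - t * star t) * star r₂‖ ≤ 1 := by
      calc ‖((1 : M) - t * star t) * star r₂‖ ≤ ‖(1 : M) - t * star t‖ * ‖star r₂‖ :=
            norm_mul_le _ _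
        _ ≤ 1 * 1 := by
            have h₁ : ‖star r₂‖ ≤ 1 := by rw [norm_star]; exact hnr₂
            have h₂ := norm_nonneg ((1 : M) - t * star t)
            have h₃ := norm_nonneg (star r₂)
            nlinarith
        _ = 1 := one_mul _
    have hb3 : ‖(r₁ * star r₁ + r₂ * s * star r₂) * (star s * b₂ - b₁ * star t) *
        (((1 : M) - t * star t) * star r₂)‖ ≤ ε₂ := by
      refine o2_tri hnA hYe ?_
      rw [norm_sub_rev, hd₂]
    have hb4 : ‖r₂ * (((1 : M) - s * star s) * (b₂ * t - s * b₁)) *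
        (r₁ * star r₁ + r₂ * star t * star r₂)‖ ≤ ε₁ := by
      refine o2_tri hnr₂ hnA' ?_
      calc ‖((1 : M) - s * star s) * (b₂ * t - s * b₁)‖
          ≤ ‖(1 : M) - s * star s‖ * ‖b₂ * t - s * b₁‖ := norm_mul_le _ _
        _ ≤ 1 * ε₁ := by rw [hd₁r]; gcongr
        _ = ε₁ := one_mul _
    have hb5 : ‖(r₂ * s) * (b₁ * star t - star s * b₂) * (((1 : M) - t * star t) * star r₂)‖
        ≤ ε₂ := by
      refine o2_tri ?_ hYe hd₂.le
      calc ‖r₂ * s‖ ≤ ‖r₂‖ * ‖s‖ := norm_mul_le _ _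
        _ ≤ 1 * 1 := by gcongr
        _ = 1 := one_mul _
    exact o2_five hb1 hb2 hb3 hb4 hb5
end

section
/- Let M be a unital C*-algebra, κ : M → M a *-automorphism, and B ⊆ M a closed two-sided ideal with κ(B) ⊆ B. Let b₁, b₂ ∈ M, let s ∈ M be an isometry, and let r₁, r₂ ∈ M be isometries with κ(r₁) = r₁, κ(r₂) = r₂ and r₁r₁* + r₂r₂* = 1, such that b₁ commutes with r₁, r₂, r₁* and r₂*. Set u := (r₁r₁* + r₂ s r₂*)·s* + r₂(1 − ss*) (a unitary in M). If s·b₁ − b₂·κ(s) ∈ B and κ(s)·b₁* − b₂*·s ∈ B, then u·b₂·κ(u)* − (r₁ b₁ r₁* + r₂ b₂ r₂*) ∈ B. -/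
lemma aux_star_mem {M : Type*} [CStarAlgebra M] (B : TwoSidedIdeal M)
    (hB : IsClosed (B : Set M)) {a : M} (ha : a ∈ B) : star a ∈ B := by
  obtain h | h := subsingleton_or_nontrivial M
  · simpa [Subsingleton.elim (star a) a] using ha
  letI := CStarAlgebra.spectralOrder M
  letI := CStarAlgebra.spectralOrderedRing M
  set c := a * star a with hc_def
  have hc : c ∈ B := B.mul_mem_right _ _ ha
  have hc0 : (0:M) ≤ c := mul_star_self_nonneg a
  have key : ∀ ε : ℝ, 0 < ε → ∃ b ∈ B, ‖star a - b‖ ≤ Real.sqrt ε := by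
    intro ε hε
    have hεu : IsUnit (ε • (1:M)) := by
      have := (isUnit_iff_ne_zero.mpr hε.ne').map (algebraMap ℝ M)
      simpa [Algebra.algebraMap_eq_smul_one] using this
    have hε1 : (0:M) ≤ ε • 1 := smul_nonneg hε.le zero_le_one
    have hdu : IsUnit (ε • (1:M) + c) :=
      CStarAlgebra.isUnit_of_le _ (le_add_of_nonneg_right hc0) (hεu.isStrictlyPositive hε1)
    obtain ⟨u, hu⟩ := hdu
    have hu0 : (0 : M) ≤ (u : M) := hu ▸ add_nonneg hε1 hc0
    have hui0 : (0 : M) ≤ (↑u⁻¹ : M) := CFC.inv_nonneg_of_nonneg u hu0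
    have hui_sa : star (↑u⁻¹ : M) = (↑u⁻¹ : M) := (IsSelfAdjoint.of_nonneg hui0)
    refine ⟨star a * (c * ↑u⁻¹), B.mul_mem_left _ _ (B.mul_mem_right _ _ hc), ?_⟩
    have hid : star a - star a * (c * ↑u⁻¹) = ε • (star a * ↑u⁻¹) := by
      have h4 : star a - star a * (c * ↑u⁻¹) = star a * ((↑u - c) * ↑u⁻¹) := by
        rw [sub_mul, u.mul_inv, mul_sub, mul_one, mul_assoc]
      rw [h4, hu, add_sub_cancel_right, smul_mul_assoc, mul_smul_comm, one_mul]
    rw [hid]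
    set x := star a * (↑u⁻¹ : M) with hx_def
    have hxx : star x * x = ↑u⁻¹ * c * ↑u⁻¹ := by
      rw [hx_def, star_mul, hui_sa, star_star, hc_def]
      noncomm_ring
    have hxx0 : (0:M) ≤ star x * x := by
      rw [hxx]
      have := star_right_conjugate_nonneg hc0 (↑u⁻¹ : M)
      rwa [hui_sa] at this
    have hle : star x * x ≤ (↑u⁻¹ : M) := by
      rw [hxx]
      calc (↑u⁻¹ : M) * c * ↑u⁻¹ ≤ ↑u⁻¹ * ↑u * ↑u⁻¹ := by
            have := (IsSelfAdjoint.of_nonneg hui0).conjugate_le_conjugate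
              (show c ≤ (u:M) from hu ▸ le_add_of_nonneg_left hε1)
            simpa [mul_assoc] using this
        _ = ↑u⁻¹ := by rw [u.inv_mul, one_mul]
    have hnorm1 : ‖star x * x‖ ≤ ‖(↑u⁻¹ : M)‖ :=
      CStarAlgebra.norm_le_norm_of_nonneg_of_le hxx0 hle
    have hui_le : ‖(↑u⁻¹ : M)‖ ≤ ε⁻¹ := by
      set w : Mˣ := ⟨ε • 1, ε⁻¹ • 1, by simp [smul_smul, mul_inv_cancel₀ hε.ne', inv_mul_cancel₀ hε.ne'], by simp [smul_smul, mul_inv_cancel₀ hε.ne', inv_mul_cancel₀ hε.ne']⟩ with hw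
      have hwu : (↑w : M) ≤ ↑u := hu ▸ le_add_of_nonneg_right hc0
      have h5 : (↑u⁻¹ : M) ≤ ↑w⁻¹ := CStarAlgebra.inv_le_inv hε1 hwu
      have h2 : ‖(↑u⁻¹ : M)‖ ≤ ‖(↑w⁻¹ : M)‖ :=
        CStarAlgebra.norm_le_norm_of_nonneg_of_le hui0 h5
      have h3 : (↑w⁻¹ : M) = ε⁻¹ • 1 := rfl
      calc ‖(↑u⁻¹ : M)‖ ≤ ‖(↑w⁻¹ : M)‖ := h2
        _ = ε⁻¹ := by rw [h3, norm_smul, norm_one, mul_one, Real.norm_eq_abs, abs_of_pos (by positivity)]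
    have hxsq : ‖x‖ ^ 2 ≤ ε⁻¹ := by
      rw [sq, ← CStarRing.norm_star_mul_self]
      exact hnorm1.trans hui_le
    have hxn : ‖x‖ ≤ ε⁻¹ * Real.sqrt ε := by
      have h6 : (ε⁻¹ * Real.sqrt ε)^2 = ε⁻¹ := by
        rw [mul_pow, Real.sq_sqrt hε.le]; field_simp
      have h7 : 0 < ε⁻¹ * Real.sqrt ε := by positivity
      nlinarith [hxsq, h6, h7, norm_nonneg x, sq_nonneg (‖x‖ - ε⁻¹ * Real.sqrt ε)]
    calc ‖ε • x‖ = ε * ‖x‖ := by rw [norm_smul, Real.norm_eq_abs, abs_of_pos hε]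
      _ ≤ ε * (ε⁻¹ * Real.sqrt ε) := by nlinarith
      _ = Real.sqrt ε := by field_simp
  -- conclude by closedness
  have : star a ∈ closure (B : Set M) := by
    rw [Metric.mem_closure_iff]
    intro δ hδ
    obtain ⟨b, hbB, hb⟩ := key ((δ / 2) ^ 2) (by positivity)
    refine ⟨b, hbB, ?_⟩
    rw [dist_eq_norm]
    calc ‖star a - b‖ ≤ Real.sqrt ((δ/2)^2) := hb
      _ = δ / 2 := Real.sqrt_sq (by positivity)
      _ < δ := by linarith
  rwa [hB.closure_eq] at this


/-- **Lemma 3.9 (the `O₂`-sum lemma), ideal membership part.** -/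
theorem stmt_5 {M : Type*} [CStarAlgebra M]
    (κ : M ≃⋆ₐ[ℂ] M) (B : TwoSidedIdeal M) (hB : IsClosed (B : Set M))
    (hκB : ∀ b ∈ B, κ b ∈ B)
    (b₁ b₂ s r₁ r₂ : M)
    (hs : star s * s = 1)
    (hr₁ : star r₁ * r₁ = 1) (hr₂ : star r₂ * r₂ = 1)
    (hκr₁ : κ r₁ = r₁) (hκr₂ : κ r₂ = r₂)
    (hO₂ : r₁ * star r₁ + r₂ * star r₂ = 1)
    (hc₁ : b₁ * r₁ = r₁ * b₁) (hc₂ : b₁ * r₂ = r₂ * b₁)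
    (hc₃ : b₁ * star r₁ = star r₁ * b₁) (hc₄ : b₁ * star r₂ = star r₂ * b₁)
    (hmem₁ : s * b₁ - b₂ * κ s ∈ B) (hmem₂ : κ s * star b₁ - star b₂ * s ∈ B) :
    ((r₁ * star r₁ + r₂ * s * star r₂) * star s + r₂ * (1 - s * star s)) * b₂ *
        star (κ ((r₁ * star r₁ + r₂ * s * star r₂) * star s + r₂ * (1 - s * star s))) -
      (r₁ * b₁ * star r₁ + r₂ * b₂ * star r₂) ∈ B := by
  have h1 : r₁ + r₂ * (star r₂ * r₁) = r₁ := by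
    conv_rhs => rw [← one_mul r₁, ← hO₂]
    rw [add_mul, mul_assoc, mul_assoc, hr₁, mul_one]
  have h2 : r₂ * (star r₂ * r₁) = 0 := add_left_cancel (h1.trans (add_zero r₁).symm)
  have horth : star r₂ * r₁ = 0 := by
    have h3 : star r₂ * (r₂ * (star r₂ * r₁)) = star r₂ * r₁ := by
      rw [← mul_assoc, hr₂, one_mul]
    rw [h2, mul_zero] at h3; exact h3.symm
  have horth' : star r₁ * r₂ = 0 := by
    have h4 := congrArg star horth
    simpa [star_mul] using h4
  set t := κ s with ht
  have hκu : κ ((r₁ * star r₁ + r₂ * s * star r₂) * star s + r₂ * (1 - s * star s))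
      = (r₁ * star r₁ + r₂ * t * star r₂) * star t + r₂ * (1 - t * star t) := by
    simp only [map_add, map_mul, map_sub, map_one, map_star, hκr₁, hκr₂, ← ht]
  rw [hκu]
  have hm : s * b₁ - b₂ * t ∈ B := hmem₁
  have hn : b₁ * star t - star s * b₂ ∈ B := by
    have h4 := aux_star_mem B hB hmem₂
    simpa [star_sub, star_mul, star_star] using h4
  set m := s * b₁ - b₂ * t with hm_def
  set n := b₁ * star t - star s * b₂ with hn_def
  set A := r₁ * star r₁ + r₂ * s * star r₂ with hA
  set U := A * star s + r₂ * (1 - s * star s) with hU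
  have key : U * b₂ * star ((r₁ * star r₁ + r₂ * t * star r₂) * star t + r₂ * (1 - t * star t))
      - (r₁ * b₁ * star r₁ + r₂ * b₂ * star r₂)
      = r₂ * (s * (n * star r₂)) - A * (n * star r₂)
        - U * (m * (r₁ * star r₁ + r₂ * (star t * star r₂)))
        + U * (m * (star t * star r₂)) := by
    have Hs : ∀ x : M, star s * (s * x) = x := fun x => by rw [← mul_assoc, hs, one_mul]
    have Hr₁ : ∀ x : M, star r₁ * (r₁ * x) = x := fun x => by rw [← mul_assoc, hr₁, one_mul]
    have Hr₂ : ∀ x : M, star r₂ * (r₂ * x) = x := fun x => by rw [← mul_assoc, hr₂, one_mul]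
    have Ho : ∀ x : M, star r₂ * (r₁ * x) = 0 := fun x => by rw [← mul_assoc, horth, zero_mul]
    have Ho' : ∀ x : M, star r₁ * (r₂ * x) = 0 := fun x => by rw [← mul_assoc, horth', zero_mul]
    have Hc₁ : ∀ x : M, b₁ * (r₁ * x) = r₁ * (b₁ * x) := fun x => by rw [← mul_assoc, hc₁, mul_assoc]
    have Hc₂ : ∀ x : M, b₁ * (r₂ * x) = r₂ * (b₁ * x) := fun x => by rw [← mul_assoc, hc₂, mul_assoc]
    have Hc₃ : ∀ x : M, b₁ * (star r₁ * x) = star r₁ * (b₁ * x) := fun x => by rw [← mul_assoc, hc₃, mul_assoc]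
    have Hc₄ : ∀ x : M, b₁ * (star r₂ * x) = star r₂ * (b₁ * x) := fun x => by rw [← mul_assoc, hc₄, mul_assoc]
    rw [hU, hA, hm_def, hn_def]
    simp only [star_add, star_mul, star_sub, star_one, star_star, sub_mul, mul_sub, add_mul,
      mul_add, mul_one, one_mul, mul_assoc]
    simp only [Hs, Hr₁, Hr₂, Ho, Ho', Hc₁, Hc₂, Hc₃, Hc₄, hs, hr₁, hr₂, horth, horth',
      hc₁, hc₂, hc₃, hc₄, mul_one, one_mul, mul_zero, zero_mul, sub_zero, zero_sub,
      add_zero, zero_add, mul_sub, sub_mul, mul_add, add_mul, mul_assoc]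
    noncomm_ring
  rw [key]
  exact B.add_mem
    (B.sub_mem
      (B.sub_mem
        (B.mul_mem_left _ _ (B.mul_mem_left _ _ (B.mul_mem_right _ _ hn)))
        (B.mul_mem_left _ _ (B.mul_mem_right _ _ hn)))
      (B.mul_mem_left _ _ (B.mul_mem_right _ _ hm)))
    (B.mul_mem_left _ _ (B.mul_mem_right _ _ hm))
end

section
/- Let G be a topological group, A a C*-algebra with a group homomorphism α : G → Aut(A) into *-automorphisms, M a unital C*-algebra, B ⊆ M a closed two-sided ideal, and β : G → Aut(M) a group homomorphism into *-automorphisms with β_g(B) ⊆ B for all g. Let (φ, u) and (ψ, v) be cocycle representations of (A, α) in (M, β). Suppose there is a sequence of isometries sₙ ∈ M such that: (a) lim_{n→∞} ‖sₙ·ψ(a) − φ(a)·sₙ‖ = 0 for all a ∈ A; (b) sₙ·ψ(a) − φ(a)·sₙ ∈ B for all a ∈ A and n ≥ 1; (c) lim_{n→∞} sup_{g∈K} ‖sₙ·v_g − u_g·β_g(sₙ)‖ = 0 for every compact set K ⊆ G; (d) sₙ·v_g − u_g·β_g(sₙ) ∈ B for all n ≥ 1 and g ∈ G; (e) s_{n+1}*·sₙ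 = 0 for all n ≥ 1. Suppose furthermore there are isometries r₁, r₂ ∈ M with β_g(rᵢ) = rᵢ for all g, r₁r₁* + r₂r₂* = 1, and such that r₁ and r₂ commute with ψ(a) for every a ∈ A and with v_g for every g ∈ G. Then (φ, u) ≍ (ψ, v) ⊕ (φ, u), where the Cuntz sum is formed with r₁, r₂; that is, there is a norm-continuous path w : [1,∞) → U(M) such that lim_{t→∞} ‖(ψ⊕φ)(a) − w_t·φ(a)·w_t*‖ = 0 for all a ∈ A, (ψ⊕φ)(a) − w_t·φ(a)·w_t* ∈ B for all a and t, lim_{t→∞} sup_{g∈K} ‖(v⊕u)_g − w_t·u_g·β_g(w_t)*‖ = 0 for every compact K ⊆ G, and (v⊕u)_g − w_t·u_g·β_g(w_t)* ∈ B for all t and g. -/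
open Filter Topology

lemma my_norm_one_le {M : Type*} [CStarAlgebra M] : ‖(1:M)‖ ≤ 1 := by
  have h : ‖(1:M)‖ * ‖(1:M)‖ = ‖(1:M)‖ := by
    rw [← CStarRing.norm_star_mul_self]; simp
  nlinarith [norm_nonneg (1:M)]

lemma my_norm_isom {M : Type*} [CStarAlgebra M] (x : M) (h : star x * x = 1) : ‖x‖ ≤ 1 := by
  have h2 : ‖x‖ * ‖x‖ ≤ 1 := by rw [← CStarRing.norm_star_mul_self, h]; exact my_norm_one_le
  nlinarith [norm_nonneg x]

lemma star_mem_of_mem {M : Type*} [CStarAlgebra M] (B : TwoSidedIdeal M)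
    (hB : IsClosed (B : Set M)) {x : M} (hx : x ∈ B) : star x ∈ B := by
  have ha : IsSelfAdjoint (star x * x) := IsSelfAdjoint.star_mul_self x
  set a := star x * x with ha_def
  have haB : a ∈ B := B.mul_mem_left (star x) x hx
  have hspec : ∀ l ∈ spectrum ℝ a, 0 ≤ l := spectrum_star_mul_self_nonneg
  have key : ∀ δ : ℝ, 0 < δ → ∃ y ∈ (B : Set M), dist (star x) y < δ := by
    intro δ hδ
    set ε : ℝ := δ ^ 2 / 2 with hε_def
    have hε : 0 < ε := by positivity
    have hne : ∀ l ∈ spectrum ℝ a, l + ε ≠ 0 := fun l hl => by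
      have := hspec l hl; positivity
    set h : ℝ → ℝ := fun l => (l + ε)⁻¹ with hh
    have hcont : ContinuousOn h (spectrum ℝ a) :=
      ContinuousOn.inv₀ (by fun_prop) hne
    have hcont2 : ContinuousOn (fun l : ℝ => l * h l) (spectrum ℝ a) :=
      continuousOn_id.mul hcont
    have hcont3 : ContinuousOn (fun l : ℝ => ε * h l) (spectrum ℝ a) :=
      continuousOn_const.mul hcont
    set y : M := (a * cfc h a) * star x with hy
    have hyB : y ∈ B := B.mul_mem_right _ _ (B.mul_mem_right _ _ haB)
    set g : M := cfc (fun l : ℝ => ε * h l) a with hg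
    have hg_sa : IsSelfAdjoint g := IsSelfAdjoint.cfc
    have h1 : cfc (fun l : ℝ => l * h l) a = a * cfc h a := by
      rw [cfc_mul _ _ a (by fun_prop) hcont, cfc_id' ℝ a]
    have h2 : (1 : M) - cfc (fun l : ℝ => l * h l) a = g := by
      rw [← cfc_one ℝ a, ← cfc_sub _ _ a (by fun_prop) hcont2]
      exact cfc_congr fun l hl => by
        have hne' := hne l hl
        simp only [hh, Pi.one_apply]
        field_simp
        ring
    have hone : star x - y = g * star x := by
      rw [hy, ← h1, ← h2, sub_mul, one_mul]
    have hnorm : ‖star x - y‖ ^ 2 ≤ ε / 4 := by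
      rw [hone, sq, ← CStarRing.norm_self_mul_star]
      have hstar : star (g * star x) = x * g := by
        rw [star_mul, star_star, hg_sa.star_eq]
      have hmid : g * star x * (x * g) = g * a * g := by
        rw [ha_def]; noncomm_ring
      have e1 : cfc (fun l : ℝ => (ε * h l) * l) a = g * a := by
        rw [cfc_mul _ _ a hcont3 (by fun_prop), cfc_id' ℝ a, ← hg]
      have e2 : cfc (fun l : ℝ => ((ε * h l) * l) * (ε * h l)) a = (g * a) * g := by
        rw [cfc_mul (fun l : ℝ => ε * h l * l) (fun l : ℝ => ε * h l) a (hcont3.mul continuousOn_id) hcont3, e1, ← hg]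
      rw [hstar, hmid, ← e2]
      apply norm_cfc_le (by positivity)
      intro l hl
      have hl0 := hspec l hl
      have hlε : 0 < l + ε := by positivity
      have hqpos : 0 < (l + ε)⁻¹ := by positivity
      have hq : (l + ε)⁻¹ * (l + ε) = 1 := inv_mul_cancel₀ hlε.ne'
      have hq2 : ((l + ε)⁻¹ * (l + ε)) ^ 2 = 1 := by rw [hq]; norm_num
      rw [Real.norm_eq_abs, hh, abs_of_nonneg (by positivity)]
      nlinarith [mul_self_nonneg ((l + ε)⁻¹ * (l - ε)), hq2, hε.le, hqpos.le, hl0]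
    refine ⟨y, hyB, ?_⟩
    rw [dist_eq_norm]
    nlinarith [norm_nonneg (star x - y), sq_nonneg δ, hδ]
  have : star x ∈ closure (B : Set M) := Metric.mem_closure_iff.mpr key
  rwa [hB.closure_eq] at this

lemma key_unitary {M : Type*} [Ring M] [StarRing M] (r₁ r₂ S : M)
    (h1 : star r₁ * r₁ = 1) (h2 : star r₂ * r₂ = 1)
    (h12 : star r₁ * r₂ = 0) (h21 : star r₂ * r₁ = 0)
    (hO : r₁ * star r₁ + r₂ * star r₂ = 1) (hS : star S * S = 1) :
    star (r₁ * (star r₁ * star S) + r₂ * (S * (star r₂ * star S)) + r₂ - r₂ * (S * star S))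
      * (r₁ * (star r₁ * star S) + r₂ * (S * (star r₂ * star S)) + r₂ - r₂ * (S * star S)) = 1 ∧
    (r₁ * (star r₁ * star S) + r₂ * (S * (star r₂ * star S)) + r₂ - r₂ * (S * star S))
      * star (r₁ * (star r₁ * star S) + r₂ * (S * (star r₂ * star S)) + r₂ - r₂ * (S * star S)) = 1 := by
  have e11 : ∀ X : M, star r₁ * (r₁ * X) = X := fun X => by rw [← mul_assoc, h1, one_mul]
  have e22 : ∀ X : M, star r₂ * (r₂ * X) = X := fun X => by rw [← mul_assoc, h2, one_mul]
  have e12 : ∀ X : M, star r₁ * (r₂ * X) = 0 := fun X => by rw [← mul_assoc, h12, zero_mul]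
  have e21 : ∀ X : M, star r₂ * (r₁ * X) = 0 := fun X => by rw [← mul_assoc, h21, zero_mul]
  have eS : ∀ X : M, star S * (S * X) = X := fun X => by rw [← mul_assoc, hS, one_mul]
  constructor
  · simp only [star_add, star_sub, star_mul, star_star, mul_add, add_mul, mul_sub, sub_mul,
      mul_assoc, e11, e22, e12, e21, eS, h1, h2, h12, h21, hS, mul_zero, zero_mul, mul_one, one_mul]
    have key : S * (r₁ * (star r₁ * star S)) + S * (r₂ * (star r₂ * star S)) = S * star S := by
      rw [← mul_add]
      congr 1
      rw [← mul_assoc, ← mul_assoc, ← add_mul, hO, one_mul]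
    rw [← key]; abel
  · simp only [star_add, star_sub, star_mul, star_star, mul_add, add_mul, mul_sub, sub_mul,
      mul_assoc, e11, e22, e12, e21, eS, h1, h2, h12, h21, hS, mul_zero, zero_mul, mul_one, one_mul]
    rw [← hO]; abel

lemma key_alg {M : Type*} [Ring M] [StarRing M] (r₁ r₂ S Sg p q : M)
    (h1 : star r₁ * r₁ = 1) (h2 : star r₂ * r₂ = 1)
    (h12 : star r₁ * r₂ = 0) (h21 : star r₂ * r₁ = 0)
    (hp1 : p * star r₁ = star r₁ * p) (hp2 : p * star r₂ = star r₂ * p)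
    (hq1 : p * r₁ = r₁ * p) (hq2 : p * r₂ = r₂ * p) :
    (r₁ * p * star r₁ + r₂ * q * star r₂) *
      (r₁ * (star r₁ * star Sg) + r₂ * (Sg * (star r₂ * star Sg)) + r₂ - r₂ * (Sg * star Sg))
    - (r₁ * (star r₁ * star S) + r₂ * (S * (star r₂ * star S)) + r₂ - r₂ * (S * star S)) * q
    = r₁ * (star r₁ * (p * star Sg - star S * q))
    + r₂ * (S * (star r₂ * (p * star Sg - star S * q)))
    - r₂ * (S * (p * star Sg - star S * q))
    + r₂ * ((S * p - q * Sg) * star Sg)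
    - r₂ * ((S * p - q * Sg) * (star r₂ * star Sg)) := by
  have e11 : ∀ X : M, star r₁ * (r₁ * X) = X := fun X => by rw [← mul_assoc, h1, one_mul]
  have e22 : ∀ X : M, star r₂ * (r₂ * X) = X := fun X => by rw [← mul_assoc, h2, one_mul]
  have e12 : ∀ X : M, star r₁ * (r₂ * X) = 0 := fun X => by rw [← mul_assoc, h12, zero_mul]
  have e21 : ∀ X : M, star r₂ * (r₁ * X) = 0 := fun X => by rw [← mul_assoc, h21, zero_mul]
  have f1 : ∀ X : M, p * (star r₁ * X) = star r₁ * (p * X) := fun X => by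
    rw [← mul_assoc, hp1, mul_assoc]
  have f2 : ∀ X : M, p * (star r₂ * X) = star r₂ * (p * X) := fun X => by
    rw [← mul_assoc, hp2, mul_assoc]
  have g1 : ∀ X : M, p * (r₁ * X) = r₁ * (p * X) := fun X => by
    rw [← mul_assoc, hq1, mul_assoc]
  have g2 : ∀ X : M, p * (r₂ * X) = r₂ * (p * X) := fun X => by
    rw [← mul_assoc, hq2, mul_assoc]
  simp only [mul_add, add_mul, mul_sub, sub_mul, mul_assoc, e11, e22, e12, e21,
    h1, h2, h12, h21, f1, f2, g1, g2, hp1, hp2, hq1, hq2, mul_zero, zero_mul, mul_one, one_mul]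
  abel

lemma floor_ev (x : ℝ) (hx : ∀ k : ℤ, x ≠ k) : ∀ᶠ y in 𝓝 x, ⌊y⌋ = ⌊x⌋ := by
  have h1 : (⌊x⌋ : ℝ) < x := lt_of_le_of_ne (Int.floor_le x) (Ne.symm (hx ⌊x⌋))
  have h2 : x < ⌊x⌋ + 1 := Int.lt_floor_add_one x
  filter_upwards [Ioo_mem_nhds h1 h2] with y hy
  exact Int.floor_eq_iff.mpr ⟨hy.1.le, hy.2⟩

lemma cont_weight {E : Type*} [NormedAddCommGroup E] [NormedSpace ℝ E] (f : ℝ → ℝ) (g : ℝ → E)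
    (hf : Continuous f) (hC : ∀ t, ‖g t‖ ≤ 1)
    (h : ∀ x, f x = 0 ∨ ∀ᶠ y in 𝓝 x, g y = g x) :
    Continuous fun t => f t • g t := by
  rw [continuous_iff_continuousAt]; intro x
  rcases h x with h0 | hc
  · have hb : ∀ t, ‖f t • g t‖ ≤ |f t| := by
      intro t
      rw [norm_smul, Real.norm_eq_abs]
      nlinarith [abs_nonneg (f t), hC t, norm_nonneg (g t)]
    have h' : Tendsto (fun t => |f t|) (𝓝 x) (𝓝 0) := by
      have := (hf.tendsto x).abs
      rwa [h0, abs_zero] at this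
    simpa [ContinuousAt, h0] using squeeze_zero_norm hb h'
  · apply ContinuousAt.congr ((hf.continuousAt).smul (continuousAt_const : ContinuousAt (fun _ : ℝ => g x) x))
    filter_upwards [hc] with y hy
    rw [hy]
    rfl

lemma idx_consec (t : ℝ) (ht : 1 ≤ t) :
    2 * (⌊t/2⌋).toNat + 1 = 2 * (⌊(t+1)/2⌋).toNat + 1 ∨
    2 * (⌊(t+1)/2⌋).toNat = (2 * (⌊t/2⌋).toNat + 1) + 1 := by
  have hk0 : (0:ℤ) ≤ ⌊t/2⌋ := Int.floor_nonneg.mpr (by linarith)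
  have h1 : (⌊t/2⌋ : ℝ) ≤ t/2 := Int.floor_le _
  have h2 : t/2 < ⌊t/2⌋ + 1 := Int.lt_floor_add_one _
  by_cases hc : t < 2*(⌊t/2⌋:ℝ) + 1
  · left
    have he : ⌊(t+1)/2⌋ = ⌊t/2⌋ := Int.floor_eq_iff.mpr ⟨by linarith, by linarith⟩
    rw [he]
  · right
    have he : ⌊(t+1)/2⌋ = ⌊t/2⌋ + 1 := Int.floor_eq_iff.mpr ⟨by push_cast; linarith, by push_cast; linarith⟩
    rw [he]; omega

lemma Ebound {M : Type*} [CStarAlgebra M] (r₁ r₂ S Sg D₁ D₂ : M)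
    (h1' : ‖star r₁‖ ≤ 1) (h2 : ‖r₂‖ ≤ 1) (h2' : ‖star r₂‖ ≤ 1)
    (h1 : ‖r₁‖ ≤ 1) (hS : ‖S‖ ≤ 1) (hSg : ‖star Sg‖ ≤ 1) :
    ‖r₁ * (star r₁ * D₂) + r₂ * (S * (star r₂ * D₂)) - r₂ * (S * D₂)
      + r₂ * (D₁ * star Sg) - r₂ * (D₁ * (star r₂ * star Sg))‖ ≤ 3 * ‖D₂‖ + 2 * ‖D₁‖ := by
  have nb : ∀ x y : M, ‖x‖ ≤ 1 → ‖x * y‖ ≤ ‖y‖ := fun x y hx => by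
    calc ‖x * y‖ ≤ ‖x‖ * ‖y‖ := norm_mul_le x y
    _ ≤ 1 * ‖y‖ := mul_le_mul_of_nonneg_right hx (norm_nonneg y)
    _ = ‖y‖ := one_mul _
  have nb' : ∀ x y : M, ‖y‖ ≤ 1 → ‖x * y‖ ≤ ‖x‖ := fun x y hy => by
    calc ‖x * y‖ ≤ ‖x‖ * ‖y‖ := norm_mul_le x y
    _ ≤ ‖x‖ * 1 := mul_le_mul_of_nonneg_left hy (norm_nonneg x)
    _ = ‖x‖ := mul_one _
  have b1 : ‖r₁ * (star r₁ * D₂)‖ ≤ ‖D₂‖ := (nb _ _ h1).trans (nb _ _ h1')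
  have b2 : ‖r₂ * (S * (star r₂ * D₂))‖ ≤ ‖D₂‖ := (nb _ _ h2).trans ((nb _ _ hS).trans (nb _ _ h2'))
  have b3 : ‖r₂ * (S * D₂)‖ ≤ ‖D₂‖ := (nb _ _ h2).trans (nb _ _ hS)
  have b4 : ‖r₂ * (D₁ * star Sg)‖ ≤ ‖D₁‖ := (nb _ _ h2).trans (nb' _ _ hSg)
  have b5 : ‖r₂ * (D₁ * (star r₂ * star Sg))‖ ≤ ‖D₁‖ :=
    (nb _ _ h2).trans (nb' _ _ ((nb _ _ h2').trans hSg))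
  calc ‖r₁ * (star r₁ * D₂) + r₂ * (S * (star r₂ * D₂)) - r₂ * (S * D₂)
      + r₂ * (D₁ * star Sg) - r₂ * (D₁ * (star r₂ * star Sg))‖
      ≤ ‖r₁ * (star r₁ * D₂) + r₂ * (S * (star r₂ * D₂)) - r₂ * (S * D₂)
      + r₂ * (D₁ * star Sg)‖ + ‖r₂ * (D₁ * (star r₂ * star Sg))‖ := norm_sub_le _ _
    _ ≤ (‖r₁ * (star r₁ * D₂) + r₂ * (S * (star r₂ * D₂)) - r₂ * (S * D₂)‖
      + ‖r₂ * (D₁ * star Sg)‖) + ‖r₂ * (D₁ * (star r₂ * star Sg))‖ := by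
        gcongr; exact norm_add_le _ _
    _ ≤ ((‖r₁ * (star r₁ * D₂) + r₂ * (S * (star r₂ * D₂))‖ + ‖r₂ * (S * D₂)‖)
      + ‖r₂ * (D₁ * star Sg)‖) + ‖r₂ * (D₁ * (star r₂ * star Sg))‖ := by
        gcongr; exact norm_sub_le _ _
    _ ≤ (((‖r₁ * (star r₁ * D₂)‖ + ‖r₂ * (S * (star r₂ * D₂))‖) + ‖r₂ * (S * D₂)‖)
      + ‖r₂ * (D₁ * star Sg)‖) + ‖r₂ * (D₁ * (star r₂ * star Sg))‖ := by
        gcongr; exact norm_add_le _ _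
    _ ≤ 3 * ‖D₂‖ + 2 * ‖D₁‖ := by linarith

set_option maxHeartbeats 2000000 in
/-- **Lemma 3.10.** A sufficient criterion for absorption of cocycle
representations: if there is a sequence of isometries asymptotically
intertwining `(ψ, v)` and `(φ, u)` (exactly, modulo the ideal `B`), with
orthogonal consecutive ranges, and a `β`-fixed unital copy of `O₂` commuting
with the range of `(ψ, v)`, then `(φ, u) ≍ (ψ, v) ⊕ (φ, u)`. -/
theorem stmt_6 {G : Type*} [Group G] [TopologicalSpace G] [IsTopologicalGroup G]
    {A : Type*} [NonUnitalCStarAlgebra A]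
    {M : Type*} [CStarAlgebra M]
    (B : TwoSidedIdeal M) (hBclosed : IsClosed (B : Set M))
    (α : G → (A ≃⋆ₐ[ℂ] A)) (hα : ∀ g h a, α (g * h) a = α g (α h a))
    (β : G → (M ≃⋆ₐ[ℂ] M)) (hβ : ∀ g h x, β (g * h) x = β g (β h x))
    (hβB : ∀ g, ∀ b ∈ B, β g b ∈ B)
    (φ : A →⋆ₙₐ[ℂ] M) (u : G → M)
    (hu : ∀ g, u g ∈ unitary M)
    (hucoc : ∀ g h, u (g * h) = u g * β g (u h))
    (hucov : ∀ g a, u g * β g (φ a) * star (u g) = φ (α g a))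
    (ψ : A →⋆ₙₐ[ℂ] M) (v : G → M)
    (hv : ∀ g, v g ∈ unitary M)
    (hvcoc : ∀ g h, v (g * h) = v g * β g (v h))
    (hvcov : ∀ g a, v g * β g (ψ a) * star (v g) = ψ (α g a))
    (s : ℕ → M) (hs : ∀ n, star (s n) * s n = 1)
    (ha : ∀ a : A, Tendsto (fun n => ‖s n * ψ a - φ a * s n‖) atTop (𝓝 0))
    (hb : ∀ (a : A) (n : ℕ), s n * ψ a - φ a * s n ∈ B)
    (hc : ∀ K : Set G, IsCompact K →
      TendstoUniformlyOn (fun n g => s n * v g - u g * β g (s n)) 0 atTop K)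
    (hd : ∀ (n : ℕ) (g : G), s n * v g - u g * β g (s n) ∈ B)
    (he : ∀ n, star (s (n + 1)) * s n = 0)
    (r₁ r₂ : M) (hr₁ : star r₁ * r₁ = 1) (hr₂ : star r₂ * r₂ = 1)
    (hβr₁ : ∀ g, β g r₁ = r₁) (hβr₂ : ∀ g, β g r₂ = r₂)
    (hO₂ : r₁ * star r₁ + r₂ * star r₂ = 1)
    (hcomm₁ : ∀ a : A, r₁ * ψ a = ψ a * r₁ ∧ r₂ * ψ a = ψ a * r₂)
    (hcomm₂ : ∀ g : G, r₁ * v g = v g * r₁ ∧ r₂ * v g = v g * r₂) :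
    ∃ w : ℝ → M,
      ContinuousOn w (Set.Ici (1 : ℝ)) ∧
      (∀ t ∈ Set.Ici (1 : ℝ), w t ∈ unitary M) ∧
      (∀ a : A, Tendsto
        (fun t => ‖(r₁ * ψ a * star r₁ + r₂ * φ a * star r₂) - w t * φ a * star (w t)‖)
        atTop (𝓝 0)) ∧
      (∀ a : A, ∀ t ∈ Set.Ici (1 : ℝ),
        (r₁ * ψ a * star r₁ + r₂ * φ a * star r₂) - w t * φ a * star (w t) ∈ B) ∧
      (∀ K : Set G, IsCompact K →
        TendstoUniformlyOn
          (fun t g => (r₁ * v g * star r₁ + r₂ * u g * star r₂) -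
            w t * u g * star (β g (w t))) 0 atTop K) ∧
      (∀ t ∈ Set.Ici (1 : ℝ), ∀ g : G,
        (r₁ * v g * star r₁ + r₂ * u g * star r₂) - w t * u g * star (β g (w t)) ∈ B) := by
  classical
  have hu' : ∀ g, star (u g) * u g = 1 ∧ u g * star (u g) = 1 := fun g => Unitary.mem_iff.mp (hu g)
  have hv' : ∀ g, star (v g) * v g = 1 ∧ v g * star (v g) = 1 := fun g => Unitary.mem_iff.mp (hv g)
  have e1 : ∀ X : M, star r₁ * (r₁ * X) = X := fun X => by rw [← mul_assoc, hr₁, one_mul]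
  have hr12 : star r₁ * r₂ = 0 := by
    have ha1 : star r₁ * ((r₁ * star r₁ + r₂ * star r₂) * r₂) = star r₁ * r₂ := by
      rw [hO₂, one_mul]
    have ha2 : star r₁ * ((r₁ * star r₁ + r₂ * star r₂) * r₂) = star r₁ * r₂ + star r₁ * r₂ := by
      rw [add_mul, mul_add, mul_assoc r₁ (star r₁) r₂, e1, mul_assoc r₂ (star r₂) r₂, hr₂, mul_one]
    have hz : star r₁ * r₂ + star r₁ * r₂ = star r₁ * r₂ := ha2.symm.trans ha1
    have hz2 : star r₁ * r₂ + star r₁ * r₂ = star r₁ * r₂ + 0 := by rw [add_zero]; exact hz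
    exact add_left_cancel hz2
  have hr21 : star r₂ * r₁ = 0 := by
    have := congrArg star hr12
    simpa [star_mul] using this
  have hψ₁ : ∀ a : A, ψ a * star r₁ = star r₁ * ψ a := fun a => by
    have h := congrArg star (hcomm₁ (star a)).1
    simpa [star_mul, map_star] using h
  have hψ₂ : ∀ a : A, ψ a * star r₂ = star r₂ * ψ a := fun a => by
    have h := congrArg star (hcomm₁ (star a)).2
    simpa [star_mul, map_star] using h
  have hv₁ : ∀ g, v g * star r₁ = star r₁ * v g := fun g => by
    have hA : star (v g) * star r₁ = star r₁ * star (v g) := by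
      simpa [star_mul] using congrArg star (hcomm₂ g).1
    have h1 := congrArg (fun x : M => v g * x * v g) hA
    simp only [mul_assoc] at h1
    rw [← mul_assoc (v g) (star (v g)), (hv' g).2, one_mul, (hv' g).1, mul_one] at h1
    exact h1.symm
  have hv₂ : ∀ g, v g * star r₂ = star r₂ * v g := fun g => by
    have hA : star (v g) * star r₂ = star r₂ * star (v g) := by
      simpa [star_mul] using congrArg star (hcomm₂ g).2
    have h1 := congrArg (fun x : M => v g * x * v g) hA
    simp only [mul_assoc] at h1
    rw [← mul_assoc (v g) (star (v g)), (hv' g).2, one_mul, (hv' g).1, mul_one] at h1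
    exact h1.symm
  have hnr₁ : ‖r₁‖ ≤ 1 := my_norm_isom r₁ hr₁
  have hnr₂ : ‖r₂‖ ≤ 1 := my_norm_isom r₂ hr₂
  have hns : ∀ n, ‖s n‖ ≤ 1 := fun n => my_norm_isom _ (hs n)
  have hnu : ∀ g, ‖u g‖ ≤ 1 := fun g => my_norm_isom _ (hu' g).1
  have hnv : ∀ g, ‖v g‖ ≤ 1 := fun g => my_norm_isom _ (hv' g).1
  set c1 : ℝ → ℝ := fun t => |Real.sin (Real.pi * t / 2)| with hc1
  set c2 : ℝ → ℝ := fun t => |Real.cos (Real.pi * t / 2)| with hc2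
  set o : ℝ → ℕ := fun t => 2 * (⌊t / 2⌋).toNat + 1 with ho
  set e : ℝ → ℕ := fun t => 2 * (⌊(t + 1) / 2⌋).toNat with he'
  set S : ℝ → M := fun t => c1 t • s (o t) + c2 t • s (e t) with hS
  set W : ℝ → M := fun t => r₁ * (star r₁ * star (S t)) + r₂ * (S t * (star r₂ * star (S t)))
    + r₂ - r₂ * (S t * star (S t)) with hW
  have hb1 : ∀ t, |c1 t| ≤ 1 := fun t => by
    simp only [hc1, abs_abs]; exact Real.abs_sin_le_one _
  have hb2 : ∀ t, |c2 t| ≤ 1 := fun t => by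
    simp only [hc2, abs_abs]; exact Real.abs_cos_le_one _
  have hsum : ∀ t, c1 t * c1 t + c2 t * c2 t = 1 := fun t => by
    simp only [hc1, hc2]
    nlinarith [Real.sin_sq_add_cos_sq (Real.pi * t / 2), sq_abs (Real.sin (Real.pi * t / 2)),
      sq_abs (Real.cos (Real.pi * t / 2))]
  have horth : ∀ t : ℝ, 1 ≤ t → star (s (o t)) * s (e t) = 0 ∧ star (s (e t)) * s (o t) = 0 := by
    intro t ht
    rcases idx_consec t ht with h | h
    · have h1 : star (s (o t)) * s (e t) = 0 := by
        have hoe : o t = e t + 1 := by simp only [ho, he']; exact h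
        rw [hoe]; exact he (e t)
      exact ⟨h1, by simpa [star_mul] using congrArg star h1⟩
    · have h1 : star (s (e t)) * s (o t) = 0 := by
        have hoe : e t = o t + 1 := by simp only [ho, he']; exact h
        rw [hoe]; exact he (o t)
      exact ⟨by simpa [star_mul] using congrArg star h1, h1⟩
  have hSiso : ∀ t : ℝ, 1 ≤ t → star (S t) * S t = 1 := by
    intro t ht
    obtain ⟨hA, hB⟩ := horth t ht
    simp only [hS, star_add, star_smul, star_trivial, add_mul, mul_add, smul_mul_smul_comm,
      hA, hB, hs, smul_zero, add_zero, zero_add]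
    rw [← add_smul, hsum t, one_smul]
  have hScont : Continuous S := by
    rw [hS]
    apply Continuous.add
    · refine cont_weight _ _ ?_ (fun t => hns _) ?_
      · rw [hc1]
        exact (Real.continuous_sin.comp ((continuous_const.mul continuous_id).div_const 2)).abs
      · intro x
        by_cases hx : ∃ k : ℤ, x = 2 * k
        · left
          obtain ⟨k, rfl⟩ := hx
          simp only [hc1]
          have hq : Real.pi * (2 * (k:ℝ)) / 2 = k * Real.pi := by ring
          rw [hq, Real.sin_int_mul_pi, abs_zero]
        · right
          have hx2 : ∀ m : ℤ, x / 2 ≠ m := fun m hm => hx ⟨m, by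
            field_simp at hm; linarith⟩
          have htd : Tendsto (fun y : ℝ => y / 2) (𝓝 x) (𝓝 (x/2)) :=
            (continuous_id.div_const 2).tendsto x
          filter_upwards [htd.eventually (floor_ev (x/2) hx2)] with y hy
          simp only [ho]
          rw [hy]
    · refine cont_weight _ _ ?_ (fun t => hns _) ?_
      · rw [hc2]
        exact (Real.continuous_cos.comp ((continuous_const.mul continuous_id).div_const 2)).abs
      · intro x
        by_cases hx : ∃ k : ℤ, x = 2 * k - 1
        · left
          obtain ⟨k, rfl⟩ := hx
          simp only [hc2]
          have hq : Real.pi * (2 * (k:ℝ) - 1) / 2 = k * Real.pi - Real.pi / 2 := by ring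
          rw [hq, Real.cos_sub, Real.cos_pi_div_two, Real.sin_pi_div_two, Real.sin_int_mul_pi]
          simp
        · right
          have hx2 : ∀ m : ℤ, (x + 1) / 2 ≠ m := fun m hm => hx ⟨m, by
            field_simp at hm; linarith⟩
          have htd : Tendsto (fun y : ℝ => (y + 1) / 2) (𝓝 x) (𝓝 ((x+1)/2)) :=
            ((continuous_id.add continuous_const).div_const 2).tendsto x
          filter_upwards [htd.eventually (floor_ev ((x+1)/2) hx2)] with y hy
          simp only [he']
          rw [hy]
  have htoNat : Tendsto Int.toNat atTop atTop :=
    tendsto_atTop_atTop.mpr fun b => ⟨(b:ℤ), fun a hA => by omega⟩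
  have ho_t : Tendsto o atTop atTop := by
    have h1 : Tendsto (fun t : ℝ => (⌊t/2⌋).toNat) atTop atTop :=
      htoNat.comp (tendsto_floor_atTop.comp (tendsto_id.atTop_div_const (by norm_num)))
    apply tendsto_atTop_mono (fun t => ?_) h1
    simp only [ho]; omega
  have he_t : Tendsto e atTop atTop := by
    have h1 : Tendsto (fun t : ℝ => (⌊(t+1)/2⌋).toNat) atTop atTop :=
      htoNat.comp (tendsto_floor_atTop.comp
        ((tendsto_atTop_add_const_right _ 1 tendsto_id).atTop_div_const (by norm_num)))
    apply tendsto_atTop_mono (fun t => ?_) h1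
    simp only [he']; omega
  have hdecomp : ∀ (x y xg yg p q' : M) (c d : ℝ),
      (c • x + d • y) * p - q' * (c • xg + d • yg)
        = c • (x * p - q' * xg) + d • (y * p - q' * yg) := by
    intro x y xg yg p q' c d
    simp only [add_mul, mul_add, smul_mul_assoc, mul_smul_comm, smul_sub]
    abel
  have hsmulB : ∀ (c : ℝ) (x : M), x ∈ B → c • x ∈ B := fun c x hx => by
    rw [← Complex.coe_smul, Algebra.smul_def]
    exact B.mul_mem_left _ _ hx
  have hβS : ∀ (g : G) (t : ℝ), β g (S t) = c1 t • β g (s (o t)) + c2 t • β g (s (e t)) := by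
    intro g t
    simp only [hS]
    rw [← Complex.coe_smul, ← Complex.coe_smul, map_add, map_smul, map_smul,
      Complex.coe_smul, Complex.coe_smul]
  have hdefD1 : ∀ (a : A) (t : ℝ), S t * ψ a - φ a * S t
      = c1 t • (s (o t) * ψ a - φ a * s (o t)) + c2 t • (s (e t) * ψ a - φ a * s (e t)) := by
    intro a t
    simp only [hS]
    exact hdecomp _ _ _ _ _ _ _ _
  have hD1B : ∀ (a : A) (t : ℝ), S t * ψ a - φ a * S t ∈ B := fun a t => by
    rw [hdefD1]; exact B.add_mem (hsmulB _ _ (hb a _)) (hsmulB _ _ (hb a _))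
  have hD1n : ∀ (a : A) (t : ℝ), ‖S t * ψ a - φ a * S t‖
      ≤ ‖s (o t) * ψ a - φ a * s (o t)‖ + ‖s (e t) * ψ a - φ a * s (e t)‖ := by
    intro a t
    rw [hdefD1]
    refine (norm_add_le _ _).trans ?_
    rw [norm_smul, norm_smul, Real.norm_eq_abs, Real.norm_eq_abs]
    nlinarith [hb1 t, hb2 t, abs_nonneg (c1 t), abs_nonneg (c2 t),
      norm_nonneg (s (o t) * ψ a - φ a * s (o t)), norm_nonneg (s (e t) * ψ a - φ a * s (e t))]
  have hD2eq : ∀ (a : A) (t : ℝ), ψ a * star (S t) - star (S t) * φ a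
      = star (S t * ψ (star a) - φ (star a) * S t) := by
    intro a t
    simp [star_sub, star_mul, map_star]
  have hD2B : ∀ (a : A) (t : ℝ), ψ a * star (S t) - star (S t) * φ a ∈ B := fun a t => by
    rw [hD2eq]; exact star_mem_of_mem B hBclosed (hD1B (star a) t)
  have hD2n : ∀ (a : A) (t : ℝ), ‖ψ a * star (S t) - star (S t) * φ a‖
      ≤ ‖s (o t) * ψ (star a) - φ (star a) * s (o t)‖
        + ‖s (e t) * ψ (star a) - φ (star a) * s (e t)‖ := fun a t => by
    rw [hD2eq, norm_star]; exact hD1n (star a) t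
  have hdefDg : ∀ (g : G) (t : ℝ), S t * v g - u g * β g (S t)
      = c1 t • (s (o t) * v g - u g * β g (s (o t)))
        + c2 t • (s (e t) * v g - u g * β g (s (e t))) := by
    intro g t
    rw [hβS]
    simp only [hS]
    exact hdecomp _ _ _ _ _ _ _ _
  have hDgB : ∀ (g : G) (t : ℝ), S t * v g - u g * β g (S t) ∈ B := fun g t => by
    rw [hdefDg]; exact B.add_mem (hsmulB _ _ (hd _ g)) (hsmulB _ _ (hd _ g))
  have hDgn : ∀ (g : G) (t : ℝ), ‖S t * v g - u g * β g (S t)‖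
      ≤ ‖s (o t) * v g - u g * β g (s (o t))‖ + ‖s (e t) * v g - u g * β g (s (e t))‖ := by
    intro g t
    rw [hdefDg]
    refine (norm_add_le _ _).trans ?_
    rw [norm_smul, norm_smul, Real.norm_eq_abs, Real.norm_eq_abs]
    nlinarith [hb1 t, hb2 t, abs_nonneg (c1 t), abs_nonneg (c2 t),
      norm_nonneg (s (o t) * v g - u g * β g (s (o t))),
      norm_nonneg (s (e t) * v g - u g * β g (s (e t)))]
  have hD2geq : ∀ (g : G) (t : ℝ), v g * star (β g (S t)) - star (S t) * u g
      = -(v g * star (S t * v g - u g * β g (S t)) * u g) := by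
    intro g t
    simp only [star_sub, star_mul, mul_sub, sub_mul, mul_assoc]
    rw [← mul_assoc (v g) (star (v g)), (hv' g).2, one_mul, (hu' g).1, mul_one, neg_sub]
  have hD2gB : ∀ (g : G) (t : ℝ), v g * star (β g (S t)) - star (S t) * u g ∈ B := fun g t => by
    rw [hD2geq]
    exact B.neg_mem (B.mul_mem_right _ _ (B.mul_mem_left _ _
      (star_mem_of_mem B hBclosed (hDgB g t))))
  have hD2gn : ∀ (g : G) (t : ℝ), ‖v g * star (β g (S t)) - star (S t) * u g‖
      ≤ ‖S t * v g - u g * β g (S t)‖ := fun g t => by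
    rw [hD2geq, norm_neg]
    calc ‖v g * star (S t * v g - u g * β g (S t)) * u g‖
        ≤ ‖v g * star (S t * v g - u g * β g (S t))‖ * ‖u g‖ := norm_mul_le _ _
      _ ≤ ‖v g * star (S t * v g - u g * β g (S t))‖ * 1 :=
          mul_le_mul_of_nonneg_left (hnu g) (norm_nonneg _)
      _ = ‖v g * star (S t * v g - u g * β g (S t))‖ := mul_one _
      _ ≤ ‖v g‖ * ‖star (S t * v g - u g * β g (S t))‖ := norm_mul_le _ _
      _ ≤ 1 * ‖star (S t * v g - u g * β g (S t))‖ :=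
          mul_le_mul_of_nonneg_right (hnv g) (norm_nonneg _)
      _ = ‖S t * v g - u g * β g (S t)‖ := by rw [one_mul, norm_star]
  have hWu : ∀ t : ℝ, 1 ≤ t → star (W t) * W t = 1 ∧ W t * star (W t) = 1 := fun t ht => by
    simp only [hW]
    exact key_unitary r₁ r₂ (S t) hr₁ hr₂ hr12 hr21 hO₂ (hSiso t ht)
  have hWn : ∀ t : ℝ, 1 ≤ t → ‖star (W t)‖ ≤ 1 := fun t ht =>
    my_norm_isom _ (by rw [star_star]; exact (hWu t ht).2)
  have hSn : ∀ t : ℝ, 1 ≤ t → ‖S t‖ ≤ 1 := fun t ht => my_norm_isom _ (hSiso t ht)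
  have hSn' : ∀ t : ℝ, 1 ≤ t → ‖star (S t)‖ ≤ 1 := fun t ht => by
    rw [norm_star]; exact hSn t ht
  have hmain_rep : ∀ (a : A) (t : ℝ), 1 ≤ t →
      (r₁ * ψ a * star r₁ + r₂ * φ a * star r₂) - W t * φ a * star (W t)
      = (r₁ * (star r₁ * (ψ a * star (S t) - star (S t) * φ a))
        + r₂ * (S t * (star r₂ * (ψ a * star (S t) - star (S t) * φ a)))
        - r₂ * (S t * (ψ a * star (S t) - star (S t) * φ a))
        + r₂ * ((S t * ψ a - φ a * S t) * star (S t))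
        - r₂ * ((S t * ψ a - φ a * S t) * (star r₂ * star (S t)))) * star (W t) := by
    intro a t ht
    have h2 := (hWu t ht).2
    have h3 : ((r₁ * ψ a * star r₁ + r₂ * φ a * star r₂) * W t - W t * φ a) * star (W t)
        = (r₁ * ψ a * star r₁ + r₂ * φ a * star r₂) - W t * φ a * star (W t) := by
      rw [sub_mul, mul_assoc (r₁ * ψ a * star r₁ + r₂ * φ a * star r₂) (W t) (star (W t)),
        h2, mul_one]
    have h4 : (r₁ * ψ a * star r₁ + r₂ * φ a * star r₂) * W t - W t * φ a
        = r₁ * (star r₁ * (ψ a * star (S t) - star (S t) * φ a))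
        + r₂ * (S t * (star r₂ * (ψ a * star (S t) - star (S t) * φ a)))
        - r₂ * (S t * (ψ a * star (S t) - star (S t) * φ a))
        + r₂ * ((S t * ψ a - φ a * S t) * star (S t))
        - r₂ * ((S t * ψ a - φ a * S t) * (star r₂ * star (S t))) := by
      simp only [hW]
      exact key_alg r₁ r₂ (S t) (S t) (ψ a) (φ a) hr₁ hr₂ hr12 hr21
        (hψ₁ a) (hψ₂ a) (hcomm₁ a).1.symm (hcomm₁ a).2.symm
    rw [← h3, h4]
  have hβW : ∀ (g : G) (t : ℝ), β g (W t)
      = r₁ * (star r₁ * star (β g (S t))) + r₂ * (β g (S t) * (star r₂ * star (β g (S t)))) + r₂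
        - r₂ * (β g (S t) * star (β g (S t))) := by
    intro g t
    simp only [hW, map_sub, map_add, map_mul, map_star, hβr₁, hβr₂]
  have hβWu : ∀ (g : G) (t : ℝ), 1 ≤ t → β g (W t) * star (β g (W t)) = 1 := fun g t ht => by
    rw [← map_star, ← map_mul, (hWu t ht).2, map_one]
  have hβWn : ∀ (g : G) (t : ℝ), 1 ≤ t → ‖star (β g (W t))‖ ≤ 1 := fun g t ht =>
    my_norm_isom _ (by rw [star_star]; exact hβWu g t ht)
  have hβSiso : ∀ (g : G) (t : ℝ), 1 ≤ t → star (β g (S t)) * β g (S t) = 1 := fun g t ht => by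
    rw [← map_star, ← map_mul, hSiso t ht, map_one]
  have hβSn : ∀ (g : G) (t : ℝ), 1 ≤ t → ‖star (β g (S t))‖ ≤ 1 := fun g t ht => by
    rw [norm_star]; exact my_norm_isom _ (hβSiso g t ht)
  have hmain_coc : ∀ (g : G) (t : ℝ), 1 ≤ t →
      (r₁ * v g * star r₁ + r₂ * u g * star r₂) - W t * u g * star (β g (W t))
      = (r₁ * (star r₁ * (v g * star (β g (S t)) - star (S t) * u g))
        + r₂ * (S t * (star r₂ * (v g * star (β g (S t)) - star (S t) * u g)))
        - r₂ * (S t * (v g * star (β g (S t)) - star (S t) * u g))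
        + r₂ * ((S t * v g - u g * β g (S t)) * star (β g (S t)))
        - r₂ * ((S t * v g - u g * β g (S t)) * (star r₂ * star (β g (S t)))))
          * star (β g (W t)) := by
    intro g t ht
    have h2 := hβWu g t ht
    have h3 : ((r₁ * v g * star r₁ + r₂ * u g * star r₂) * β g (W t) - W t * u g)
          * star (β g (W t))
        = (r₁ * v g * star r₁ + r₂ * u g * star r₂) - W t * u g * star (β g (W t)) := by
      rw [sub_mul, mul_assoc (r₁ * v g * star r₁ + r₂ * u g * star r₂) (β g (W t))
        (star (β g (W t))), h2, mul_one]
    have h4 : (r₁ * v g * star r₁ + r₂ * u g * star r₂) * β g (W t) - W t * u g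
        = r₁ * (star r₁ * (v g * star (β g (S t)) - star (S t) * u g))
        + r₂ * (S t * (star r₂ * (v g * star (β g (S t)) - star (S t) * u g)))
        - r₂ * (S t * (v g * star (β g (S t)) - star (S t) * u g))
        + r₂ * ((S t * v g - u g * β g (S t)) * star (β g (S t)))
        - r₂ * ((S t * v g - u g * β g (S t)) * (star r₂ * star (β g (S t)))) := by
      rw [hβW g t]
      simp only [hW]
      exact key_alg r₁ r₂ (S t) (β g (S t)) (v g) (u g) hr₁ hr₂ hr12 hr21
        (hv₁ g) (hv₂ g) (hcomm₂ g).1.symm (hcomm₂ g).2.symm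
    rw [← h3, h4]
  have hnr₁' : ‖star r₁‖ ≤ 1 := by rw [norm_star]; exact hnr₁
  have hnr₂' : ‖star r₂‖ ≤ 1 := by rw [norm_star]; exact hnr₂
  refine ⟨W, ?_, ?_, ?_, ?_, ?_, ?_⟩
  · apply Continuous.continuousOn
    simp only [hW]
    exact (((continuous_const.mul (continuous_const.mul hScont.star)).add
      (continuous_const.mul (hScont.mul (continuous_const.mul hScont.star)))).add
      continuous_const).sub (continuous_const.mul (hScont.mul hScont.star))
  · exact fun t ht => Unitary.mem_iff.mpr (hWu t ht)
  · intro a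
    apply squeeze_zero' (Eventually.of_forall fun t => norm_nonneg _)
      (g := fun t => 3 * (‖s (o t) * ψ (star a) - φ (star a) * s (o t)‖
        + ‖s (e t) * ψ (star a) - φ (star a) * s (e t)‖)
        + 2 * (‖s (o t) * ψ a - φ a * s (o t)‖ + ‖s (e t) * ψ a - φ a * s (e t)‖))
    · filter_upwards [eventually_ge_atTop (1:ℝ)] with t ht
      rw [hmain_rep a t ht]
      have hE := Ebound r₁ r₂ (S t) (S t) (S t * ψ a - φ a * S t)
        (ψ a * star (S t) - star (S t) * φ a) hnr₁' hnr₂ hnr₂' hnr₁ (hSn t ht) (hSn' t ht)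
      have h5 := hD2n a t
      have h6 := hD1n a t
      calc ‖(r₁ * (star r₁ * (ψ a * star (S t) - star (S t) * φ a))
          + r₂ * (S t * (star r₂ * (ψ a * star (S t) - star (S t) * φ a)))
          - r₂ * (S t * (ψ a * star (S t) - star (S t) * φ a))
          + r₂ * ((S t * ψ a - φ a * S t) * star (S t))
          - r₂ * ((S t * ψ a - φ a * S t) * (star r₂ * star (S t)))) * star (W t)‖
          ≤ ‖r₁ * (star r₁ * (ψ a * star (S t) - star (S t) * φ a))
          + r₂ * (S t * (star r₂ * (ψ a * star (S t) - star (S t) * φ a)))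
          - r₂ * (S t * (ψ a * star (S t) - star (S t) * φ a))
          + r₂ * ((S t * ψ a - φ a * S t) * star (S t))
          - r₂ * ((S t * ψ a - φ a * S t) * (star r₂ * star (S t)))‖ * ‖star (W t)‖ :=
            norm_mul_le _ _
        _ ≤ ‖r₁ * (star r₁ * (ψ a * star (S t) - star (S t) * φ a))
          + r₂ * (S t * (star r₂ * (ψ a * star (S t) - star (S t) * φ a)))
          - r₂ * (S t * (ψ a * star (S t) - star (S t) * φ a))
          + r₂ * ((S t * ψ a - φ a * S t) * star (S t))
          - r₂ * ((S t * ψ a - φ a * S t) * (star r₂ * star (S t)))‖ * 1 :=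
            mul_le_mul_of_nonneg_left (hWn t ht) (norm_nonneg _)
        _ ≤ _ := by rw [mul_one]; linarith
    · have T1 := (ha (star a)).comp ho_t
      have T2 := (ha (star a)).comp he_t
      have T3 := (ha a).comp ho_t
      have T4 := (ha a).comp he_t
      have := ((T1.add T2).const_mul (3:ℝ)).add ((T3.add T4).const_mul (2:ℝ))
      simpa using this
  · intro a t ht
    rw [hmain_rep a t ht]
    apply B.mul_mem_right
    have m1 := hD1B a t
    have m2 := hD2B a t
    exact B.sub_mem (B.add_mem (B.sub_mem (B.add_mem
      (B.mul_mem_left _ _ (B.mul_mem_left _ _ m2))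
      (B.mul_mem_left _ _ (B.mul_mem_left _ _ (B.mul_mem_left _ _ m2))))
      (B.mul_mem_left _ _ (B.mul_mem_left _ _ m2)))
      (B.mul_mem_left _ _ (B.mul_mem_right _ _ m1)))
      (B.mul_mem_left _ _ (B.mul_mem_right _ _ m1))
  · intro K hK
    have hcK := hc K hK
    rw [Metric.tendstoUniformlyOn_iff] at hcK ⊢
    intro ε hε
    have hcK' := hcK (ε/11) (by positivity)
    rw [eventually_atTop] at hcK'
    obtain ⟨N, hN⟩ := hcK'
    filter_upwards [ho_t.eventually_ge_atTop N, he_t.eventually_ge_atTop N,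
      eventually_ge_atTop (1:ℝ)] with t hNo hNe ht
    intro g hg
    have h1 := hN (o t) hNo g hg
    have h2 := hN (e t) hNe g hg
    simp only [Pi.zero_apply, dist_zero_left] at h1 h2 ⊢
    rw [hmain_coc g t ht]
    have hE := Ebound r₁ r₂ (S t) (β g (S t)) (S t * v g - u g * β g (S t))
      (v g * star (β g (S t)) - star (S t) * u g) hnr₁' hnr₂ hnr₂' hnr₁ (hSn t ht) (hβSn g t ht)
    have h5 := hD2gn g t
    have h6 := hDgn g t
    calc ‖(r₁ * (star r₁ * (v g * star (β g (S t)) - star (S t) * u g))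
        + r₂ * (S t * (star r₂ * (v g * star (β g (S t)) - star (S t) * u g)))
        - r₂ * (S t * (v g * star (β g (S t)) - star (S t) * u g))
        + r₂ * ((S t * v g - u g * β g (S t)) * star (β g (S t)))
        - r₂ * ((S t * v g - u g * β g (S t)) * (star r₂ * star (β g (S t)))))
          * star (β g (W t))‖
        ≤ ‖r₁ * (star r₁ * (v g * star (β g (S t)) - star (S t) * u g))
        + r₂ * (S t * (star r₂ * (v g * star (β g (S t)) - star (S t) * u g)))
        - r₂ * (S t * (v g * star (β g (S t)) - star (S t) * u g))
        + r₂ * ((S t * v g - u g * β g (S t)) * star (β g (S t)))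
        - r₂ * ((S t * v g - u g * β g (S t)) * (star r₂ * star (β g (S t))))‖
          * ‖star (β g (W t))‖ := norm_mul_le _ _
      _ ≤ ‖r₁ * (star r₁ * (v g * star (β g (S t)) - star (S t) * u g))
        + r₂ * (S t * (star r₂ * (v g * star (β g (S t)) - star (S t) * u g)))
        - r₂ * (S t * (v g * star (β g (S t)) - star (S t) * u g))
        + r₂ * ((S t * v g - u g * β g (S t)) * star (β g (S t)))
        - r₂ * ((S t * v g - u g * β g (S t)) * (star r₂ * star (β g (S t))))‖ * 1 :=
          mul_le_mul_of_nonneg_left (hβWn g t ht) (norm_nonneg _)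
      _ < ε := by rw [mul_one]; linarith
  · intro t ht g
    rw [hmain_coc g t ht]
    apply B.mul_mem_right
    have m1 := hDgB g t
    have m2 := hD2gB g t
    exact B.sub_mem (B.add_mem (B.sub_mem (B.add_mem
      (B.mul_mem_left _ _ (B.mul_mem_left _ _ m2))
      (B.mul_mem_left _ _ (B.mul_mem_left _ _ (B.mul_mem_left _ _ m2))))
      (B.mul_mem_left _ _ (B.mul_mem_left _ _ m2)))
      (B.mul_mem_left _ _ (B.mul_mem_right _ _ m1)))
      (B.mul_mem_left _ _ (B.mul_mem_right _ _ m1))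
end

section
/- Let G be a topological group, A a C*-algebra with a group homomorphism α : G → Aut(A) into *-automorphisms, M a unital C*-algebra, B ⊆ M a closed two-sided ideal, and β : G → Aut(M) a group homomorphism into *-automorphisms with β_g(B) ⊆ B for all g. Let t₁, t₂ ∈ M be isometries with β_g(t₁) = t₁ and β_g(t₂) = t₂ for all g ∈ G and t₁t₁* + t₂t₂* = 1, and form all Cuntz sums x ⊕ y := t₁xt₁* + t₂yt₂* with respect to t₁, t₂ (pointwise for maps). Let (φ, u), (ψ, v), (ρ, w), (θ, x) be four cocycle representations of (A, α) in (M, β). Suppose: (a) (φ⊕ρ, u⊕w) and (ψ⊕ρ, v⊕w) are strongly asymptotically unitarily equivalent, i.e. there is a norm-continuous path p : [0,∞) → U(M) with p₀ = 1, p_t − 1 ∈ B for all t, lim_{t→∞} ‖(ψ⊕ρ)(a) − p_t·(φ⊕ρ)(a)·p_t*‖ = 0 for all a ∈ A, and lim_{t→∞} sup_{g∈K} ‖(v⊕w)_g − p_t·(u⊕w)_g·β_g(p_t)*‖ = 0 for all compact K ⊆ G; and (b) (ρ, w) ≍ (θ, x), i.e. there is a norm-continuous path q : [0,∞) → U(M)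 with lim_{t→∞} ‖θ(a) − q_t·ρ(a)·q_t*‖ = 0 and θ(a) − q_t·ρ(a)·q_t* ∈ B for all a ∈ A and t, and lim_{t→∞} sup_{g∈K} ‖x_g − q_t·w_g·β_g(q_t)*‖ = 0 for all compact K ⊆ G with x_g − q_t·w_g·β_g(q_t)* ∈ B for all t, g. Then (φ⊕θ, u⊕x) and (ψ⊕θ, v⊕x) are strongly asymptotically unitarily equivalent: there is a norm-continuous path r : [0,∞) → U(M) with r₀ = 1, r_t − 1 ∈ B for all t, lim_{t→∞} ‖(ψ⊕θ)(a) − r_t·(φ⊕θ)(a)·r_t*‖ = 0 for all a ∈ A, and lim_{t→∞} sup_{g∈K} ‖(v⊕x)_g − r_t·(u⊕x)_g·β_g(r_t)*‖ = 0 for every compact K ⊆ G. -/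
open Filter Topology


section aux
variable {M : Type*} [CStarAlgebra M]

lemma aux_norm_one_le : ‖(1 : M)‖ ≤ 1 := by
  have h : ‖(1:M)‖ * ‖(1:M)‖ = ‖(1:M)‖ := by
    rw [← CStarRing.norm_star_mul_self]; simp
  nlinarith [norm_nonneg (1:M)]

lemma aux_norm_le_one {U : M} (h : star U * U = 1) : ‖U‖ ≤ 1 := by
  have h2 : ‖U‖ * ‖U‖ = ‖(1:M)‖ := by rw [← CStarRing.norm_star_mul_self, h]
  nlinarith [norm_nonneg U, aux_norm_one_le (M := M)]

lemma aux_conj_norm {s u : M} (c : M) (hs : ‖s‖ ≤ 1) (hu : ‖u‖ ≤ 1) : ‖s * c * u‖ ≤ ‖c‖ := by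
  have h1 : ‖s*c*u‖ ≤ ‖s*c‖*‖u‖ := norm_mul_le _ _
  have h2 : ‖s*c‖ ≤ ‖s‖*‖c‖ := norm_mul_le _ _
  nlinarith [norm_nonneg u, norm_nonneg c, norm_nonneg s, norm_nonneg (s*c)]

lemma aux_cancel {U : M} (h : star U * U = 1) (z : M) : star U * (U * z) = z := by
  rw [← mul_assoc, h, one_mul]

lemma aux_telescope (Q P Q' P' X T X' T' : M) :
    T - (Q*P*star Q) * X * (Q' * star P' * star Q')
      = (T - Q * T' * star Q') + Q * (T' - P * X' * star P') * star Q'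
        + (Q * P) * (X' - star Q * X * Q') * (star P' * star Q') := by
  noncomm_ring

lemma aux_bound {Q P Q' P' : M} (X T X' T' : M)
    (hQ : ‖Q‖ ≤ 1) (hP : ‖P‖ ≤ 1) (hQ' : ‖Q'‖ ≤ 1) (hP' : ‖P'‖ ≤ 1) :
    ‖T - (Q*P*star Q) * X * (Q' * star P' * star Q')‖
      ≤ ‖T - Q * T' * star Q'‖ + ‖T' - P * X' * star P'‖ + ‖X' - star Q * X * Q'‖ := by
  rw [aux_telescope Q P Q' P' X T X' T']
  have hsQ' : ‖star Q'‖ ≤ 1 := by simpa using hQ'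
  have h1 : ‖Q * (T' - P * X' * star P') * star Q'‖ ≤ ‖T' - P * X' * star P'‖ :=
    aux_conj_norm _ hQ hsQ'
  have h2 : ‖(Q*P) * (X' - star Q * X * Q') * (star P' * star Q')‖ ≤ ‖X' - star Q * X * Q'‖ := by
    apply aux_conj_norm
    · have := norm_mul_le Q P; nlinarith [norm_nonneg Q, norm_nonneg P]
    · have := norm_mul_le (star P') (star Q')
      have e1 : ‖star P'‖ ≤ 1 := by simpa using hP'
      nlinarith [norm_nonneg (star P'), norm_nonneg (star Q')]
  calc ‖(T - Q * T' * star Q') + Q * (T' - P * X' * star P') * star Q'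
        + (Q * P) * (X' - star Q * X * Q') * (star P' * star Q')‖
      ≤ ‖(T - Q * T' * star Q') + Q * (T' - P * X' * star P') * star Q'‖
        + ‖(Q * P) * (X' - star Q * X * Q') * (star P' * star Q')‖ := norm_add_le _ _
    _ ≤ ‖T - Q * T' * star Q'‖ + ‖Q * (T' - P * X' * star P') * star Q'‖
        + ‖(Q * P) * (X' - star Q * X * Q') * (star P' * star Q')‖ := by
          have := norm_add_le (T - Q * T' * star Q') (Q * (T' - P * X' * star P') * star Q')
          linarith
    _ ≤ _ := by linarith

lemma cs_mul {t₁ t₂ : M} (ht₁ : star t₁ * t₁ = 1) (ht₂ : star t₂ * t₂ = 1)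
    (h12 : star t₁ * t₂ = 0) (h21 : star t₂ * t₁ = 0) (a b c d : M) :
    (t₁ * a * star t₁ + t₂ * b * star t₂) * (t₁ * c * star t₁ + t₂ * d * star t₂)
      = t₁ * (a * c) * star t₁ + t₂ * (b * d) * star t₂ := by
  have h12' : ∀ z : M, star t₁ * (t₂ * z) = 0 := fun z => by rw [← mul_assoc, h12, zero_mul]
  have h21' : ∀ z : M, star t₂ * (t₁ * z) = 0 := fun z => by rw [← mul_assoc, h21, zero_mul]
  simp [mul_add, add_mul, mul_assoc, aux_cancel ht₁, aux_cancel ht₂, h12', h21']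

lemma aux_master {t₁ t₂ : M}
    (ht₁ : star t₁ * t₁ = 1) (ht₂ : star t₂ * t₂ = 1)
    (hO₂ : t₁ * star t₁ + t₂ * star t₂ = 1)
    (h12 : star t₁ * t₂ = 0) (h21 : star t₂ * t₁ = 0)
    (c c' d d' k k' P P' : M)
    (hk : star k * k = 1 ∧ k * star k = 1)
    (hk' : star k' * k' = 1 ∧ k' * star k' = 1)
    (hP : ‖P‖ ≤ 1) (hP' : ‖P'‖ ≤ 1) :
    ‖(t₁ * c' * star t₁ + t₂ * d * star t₂)
      - ((t₁ * 1 * star t₁ + t₂ * k * star t₂) * P * star (t₁ * 1 * star t₁ + t₂ * k * star t₂))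
        * (t₁ * c * star t₁ + t₂ * d * star t₂)
        * ((t₁ * 1 * star t₁ + t₂ * k' * star t₂) * star P'
            * star (t₁ * 1 * star t₁ + t₂ * k' * star t₂))‖
    ≤ ‖(t₁ * c' * star t₁ + t₂ * d' * star t₂)
        - P * (t₁ * c * star t₁ + t₂ * d' * star t₂) * star P'‖
      + 2 * ‖d - k * d' * star k'‖ := by
  have hnt2 : ‖t₂‖ ≤ 1 := aux_norm_le_one ht₂
  have hsnt2 : ‖star t₂‖ ≤ 1 := by simpa using hnt2
  have hmul := cs_mul ht₁ ht₂ h12 h21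
  have hstark : star (t₁ * 1 * star t₁ + t₂ * k * star t₂)
      = t₁ * 1 * star t₁ + t₂ * star k * star t₂ := by simp [star_add, star_mul, mul_assoc]
  have hstark' : star (t₁ * 1 * star t₁ + t₂ * k' * star t₂)
      = t₁ * 1 * star t₁ + t₂ * star k' * star t₂ := by simp [star_add, star_mul, mul_assoc]
  have hQu : star (t₁*1*star t₁+t₂*k*star t₂) * (t₁*1*star t₁+t₂*k*star t₂) = 1 := by
    rw [hstark, hmul]; simp [hk.1, hO₂]
  have hQ'u : star (t₁*1*star t₁+t₂*k'*star t₂) * (t₁*1*star t₁+t₂*k'*star t₂) = 1 := by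
    rw [hstark', hmul]; simp [hk'.1, hO₂]
  have hQn : ‖t₁*1*star t₁+t₂*k*star t₂‖ ≤ 1 := aux_norm_le_one hQu
  have hQ'n : ‖t₁*1*star t₁+t₂*k'*star t₂‖ ≤ 1 := aux_norm_le_one hQ'u
  refine le_trans (aux_bound _ _ (t₁*c*star t₁+t₂*d'*star t₂) (t₁*c'*star t₁+t₂*d'*star t₂)
    hQn hP hQ'n hP') ?_
  have e1 : (t₁*c'*star t₁+t₂*d*star t₂) - (t₁*1*star t₁+t₂*k*star t₂)
        * (t₁*c'*star t₁+t₂*d'*star t₂) * star (t₁*1*star t₁+t₂*k'*star t₂)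
      = t₂ * (d - k * d' * star k') * star t₂ := by
    rw [hstark', hmul, hmul]; simp only [one_mul, mul_one]; noncomm_ring
  have p1 : ‖(t₁*c'*star t₁+t₂*d*star t₂) - (t₁*1*star t₁+t₂*k*star t₂)
        * (t₁*c'*star t₁+t₂*d'*star t₂) * star (t₁*1*star t₁+t₂*k'*star t₂)‖
      ≤ ‖d - k * d' * star k'‖ := by
    rw [e1]; exact aux_conj_norm _ hnt2 hsnt2
  have e3 : (t₁*c*star t₁+t₂*d'*star t₂) - star (t₁*1*star t₁+t₂*k*star t₂)
        * (t₁*c*star t₁+t₂*d*star t₂) * (t₁*1*star t₁+t₂*k'*star t₂)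
      = t₂ * (d' - star k * d * k') * star t₂ := by
    rw [hstark, hmul, hmul]; simp only [one_mul, mul_one]; noncomm_ring
  have key : d' - star k * d * k' = star k * (k * d' * star k' - d) * k' := by
    have h1 := aux_cancel hk.1
    simp [mul_sub, sub_mul, mul_assoc, h1, hk'.1]
  have p3 : ‖(t₁*c*star t₁+t₂*d'*star t₂) - star (t₁*1*star t₁+t₂*k*star t₂)
        * (t₁*c*star t₁+t₂*d*star t₂) * (t₁*1*star t₁+t₂*k'*star t₂)‖
      ≤ ‖d - k * d' * star k'‖ := by
    rw [e3, key]
    calc ‖t₂ * (star k * (k*d'*star k' - d) * k') * star t₂‖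
        ≤ ‖star k * (k*d'*star k' - d) * k'‖ := aux_conj_norm _ hnt2 hsnt2
      _ ≤ ‖k*d'*star k' - d‖ := aux_conj_norm _
            (by rw [norm_star]; exact aux_norm_le_one hk.1) (aux_norm_le_one hk'.1)
      _ = ‖d - k*d'*star k'‖ := norm_sub_rev _ _
  linarith

end aux




set_option maxHeartbeats 1000000 in
/-- **Lemma 5.3.** If `(φ ⊕ ρ, u ⊕ w)` is strongly asymptotically unitarily
equivalent to `(ψ ⊕ ρ, v ⊕ w)` and `(ρ, w) ≍ (θ, x)`, then `(φ ⊕ θ, u ⊕ x)` is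
strongly asymptotically unitarily equivalent to `(ψ ⊕ θ, v ⊕ x)`, where all
Cuntz sums are formed with the `β`-fixed isometries `t₁, t₂`. -/
theorem stmt_12 {G : Type*} [Group G] [TopologicalSpace G] [IsTopologicalGroup G]
    {A : Type*} [NonUnitalCStarAlgebra A]
    {M : Type*} [CStarAlgebra M]
    (B : TwoSidedIdeal M) (hBclosed : IsClosed (B : Set M))
    (α : G → (A ≃⋆ₐ[ℂ] A)) (hα : ∀ g h a, α (g * h) a = α g (α h a))
    (β : G → (M ≃⋆ₐ[ℂ] M)) (hβ : ∀ g h y, β (g * h) y = β g (β h y))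
    (hβB : ∀ g, ∀ b ∈ B, β g b ∈ B)
    (t₁ t₂ : M) (ht₁ : star t₁ * t₁ = 1) (ht₂ : star t₂ * t₂ = 1)
    (hβt₁ : ∀ g, β g t₁ = t₁) (hβt₂ : ∀ g, β g t₂ = t₂)
    (hO₂ : t₁ * star t₁ + t₂ * star t₂ = 1)
    -- the four cocycle representations
    (φ : A →⋆ₙₐ[ℂ] M) (u : G → M)
    (hu : ∀ g, u g ∈ unitary M)
    (hucoc : ∀ g h, u (g * h) = u g * β g (u h))
    (hucov : ∀ g a, u g * β g (φ a) * star (u g) = φ (α g a))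
    (ψ : A →⋆ₙₐ[ℂ] M) (v : G → M)
    (hv : ∀ g, v g ∈ unitary M)
    (hvcoc : ∀ g h, v (g * h) = v g * β g (v h))
    (hvcov : ∀ g a, v g * β g (ψ a) * star (v g) = ψ (α g a))
    (ρ : A →⋆ₙₐ[ℂ] M) (w : G → M)
    (hw : ∀ g, w g ∈ unitary M)
    (hwcoc : ∀ g h, w (g * h) = w g * β g (w h))
    (hwcov : ∀ g a, w g * β g (ρ a) * star (w g) = ρ (α g a))
    (θ : A →⋆ₙₐ[ℂ] M) (x : G → M)
    (hx : ∀ g, x g ∈ unitary M)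
    (hxcoc : ∀ g h, x (g * h) = x g * β g (x h))
    (hxcov : ∀ g a, x g * β g (θ a) * star (x g) = θ (α g a))
    -- (a) strong asymptotic unitary equivalence of (φ⊕ρ, u⊕w) and (ψ⊕ρ, v⊕w)
    (p : ℝ → M)
    (hpcont : ContinuousOn p (Set.Ici (0 : ℝ)))
    (hp0 : p 0 = 1)
    (hpunit : ∀ t ∈ Set.Ici (0 : ℝ), p t ∈ unitary M)
    (hpB : ∀ t ∈ Set.Ici (0 : ℝ), p t - 1 ∈ B)
    (hpφ : ∀ a : A, Tendsto (fun t =>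
      ‖(t₁ * ψ a * star t₁ + t₂ * ρ a * star t₂) -
        p t * (t₁ * φ a * star t₁ + t₂ * ρ a * star t₂) * star (p t)‖) atTop (𝓝 0))
    (hpu : ∀ K : Set G, IsCompact K →
      TendstoUniformlyOn (fun t g =>
        (t₁ * v g * star t₁ + t₂ * w g * star t₂) -
          p t * (t₁ * u g * star t₁ + t₂ * w g * star t₂) * star (β g (p t)))
        0 atTop K)
    -- (b) (ρ, w) ≍ (θ, x)
    (q : ℝ → M)
    (hqcont : ContinuousOn q (Set.Ici (0 : ℝ)))
    (hqunit : ∀ t ∈ Set.Ici (0 : ℝ), q t ∈ unitary M)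
    (hqφ : ∀ a : A, Tendsto (fun t => ‖θ a - q t * ρ a * star (q t)‖) atTop (𝓝 0))
    (hqφB : ∀ a : A, ∀ t ∈ Set.Ici (0 : ℝ), θ a - q t * ρ a * star (q t) ∈ B)
    (hqu : ∀ K : Set G, IsCompact K →
      TendstoUniformlyOn (fun t g => x g - q t * w g * star (β g (q t))) 0 atTop K)
    (hquB : ∀ t ∈ Set.Ici (0 : ℝ), ∀ g : G, x g - q t * w g * star (β g (q t)) ∈ B) :
    ∃ r : ℝ → M,
      ContinuousOn r (Set.Ici (0 : ℝ)) ∧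
      r 0 = 1 ∧
      (∀ t ∈ Set.Ici (0 : ℝ), r t ∈ unitary M ∧ r t - 1 ∈ B) ∧
      (∀ a : A, Tendsto (fun t =>
        ‖(t₁ * ψ a * star t₁ + t₂ * θ a * star t₂) -
          r t * (t₁ * φ a * star t₁ + t₂ * θ a * star t₂) * star (r t)‖) atTop (𝓝 0)) ∧
      (∀ K : Set G, IsCompact K →
        TendstoUniformlyOn (fun t g =>
          (t₁ * v g * star t₁ + t₂ * x g * star t₂) -
            r t * (t₁ * u g * star t₁ + t₂ * x g * star t₂) * star (β g (r t)))
          0 atTop K) := by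
  have horth12 : star t₁ * t₂ = 0 := by
    have h2 : star t₁ * (t₁ * star t₁ + t₂ * star t₂) * t₂
        = star t₁ * t₂ + star t₁ * t₂ := by
      simp [mul_add, add_mul, mul_assoc, aux_cancel ht₁, ht₂]
    rw [hO₂] at h2
    simp only [mul_one] at h2
    exact add_eq_left.mp h2.symm
  have horth21 : star t₂ * t₁ = 0 := by
    have := congrArg star horth12
    simpa [star_mul] using this
  have hmul := cs_mul ht₁ ht₂ horth12 horth21
  -- notation for the path
  refine ⟨fun t => (t₁ * 1 * star t₁ + t₂ * q t * star t₂) * p t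
      * star (t₁ * 1 * star t₁ + t₂ * q t * star t₂), ?_, ?_, ?_, ?_, ?_⟩
  · -- continuity
    have hQc : ContinuousOn (fun t => t₁ * 1 * star t₁ + t₂ * q t * star t₂) (Set.Ici (0:ℝ)) :=
      continuousOn_const.add ((continuousOn_const.mul hqcont).mul continuousOn_const)
    exact (hQc.mul hpcont).mul hQc.star
  · -- value at 0
    beta_reduce
    have hq0 := Unitary.mem_iff.mp (hqunit 0 Set.self_mem_Ici)
    have hst : star (t₁ * 1 * star t₁ + t₂ * q 0 * star t₂)
        = t₁ * 1 * star t₁ + t₂ * star (q 0) * star t₂ := by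
      simp [star_add, star_mul, mul_assoc]
    rw [hp0, mul_one (t₁ * 1 * star t₁ + t₂ * q 0 * star t₂), hst, hmul]
    simp [hq0.2, hO₂]
  · -- unitarity and ideal membership
    intro t ht
    beta_reduce
    have hq := Unitary.mem_iff.mp (hqunit t ht)
    have hst : star (t₁ * 1 * star t₁ + t₂ * q t * star t₂)
        = t₁ * 1 * star t₁ + t₂ * star (q t) * star t₂ := by
      simp [star_add, star_mul, mul_assoc]
    have hQmem : (t₁ * 1 * star t₁ + t₂ * q t * star t₂) ∈ unitary M := by
      rw [Unitary.mem_iff, hst, hmul, hmul]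
      constructor <;> simp [hq.1, hq.2, hO₂]
    constructor
    · exact mul_mem (mul_mem hQmem (hpunit t ht)) (Unitary.star_mem hQmem)
    · have hQQ : (t₁ * 1 * star t₁ + t₂ * q t * star t₂)
          * star (t₁ * 1 * star t₁ + t₂ * q t * star t₂) = 1 := by
        rw [hst, hmul]; simp [hq.2, hO₂]
      have e : (t₁ * 1 * star t₁ + t₂ * q t * star t₂) * p t
            * star (t₁ * 1 * star t₁ + t₂ * q t * star t₂) - 1
          = (t₁ * 1 * star t₁ + t₂ * q t * star t₂) * (p t - 1)
            * star (t₁ * 1 * star t₁ + t₂ * q t * star t₂) := by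
        rw [mul_sub, sub_mul, mul_one (t₁ * 1 * star t₁ + t₂ * q t * star t₂), hQQ]
      rw [e]
      exact B.mul_mem_right _ _ (B.mul_mem_left _ _ (hpB t ht))
  · -- convergence on A
    intro a
    beta_reduce
    apply squeeze_zero' (g := fun t =>
      ‖(t₁ * ψ a * star t₁ + t₂ * ρ a * star t₂)
        - p t * (t₁ * φ a * star t₁ + t₂ * ρ a * star t₂) * star (p t)‖
      + 2 * ‖θ a - q t * ρ a * star (q t)‖)
      (Eventually.of_forall fun t => norm_nonneg _)
    · filter_upwards [eventually_ge_atTop (0:ℝ)] with t ht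
      have hq := Unitary.mem_iff.mp (hqunit t ht)
      have hp1 : ‖p t‖ ≤ 1 := aux_norm_le_one (Unitary.mem_iff.mp (hpunit t ht)).1
      have e : star ((t₁ * 1 * star t₁ + t₂ * q t * star t₂) * p t
            * star (t₁ * 1 * star t₁ + t₂ * q t * star t₂))
          = (t₁ * 1 * star t₁ + t₂ * q t * star t₂) * star (p t)
            * star (t₁ * 1 * star t₁ + t₂ * q t * star t₂) := by
        rw [star_mul, star_star, star_mul, ← mul_assoc]
      rw [e]
      exact aux_master ht₁ ht₂ hO₂ horth12 horth21 (φ a) (ψ a) (θ a) (ρ a)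
        (q t) (q t) (p t) (p t) hq hq hp1 hp1
    · have h := (hpφ a).add ((hqφ a).const_mul 2)
      simpa using h
  · -- uniform convergence on compacts
    intro K hK
    rw [Metric.tendstoUniformlyOn_iff]
    intro ε hε
    have h1 := (Metric.tendstoUniformlyOn_iff.mp (hpu K hK)) (ε/4) (by positivity)
    have h2 := (Metric.tendstoUniformlyOn_iff.mp (hqu K hK)) (ε/4) (by positivity)
    filter_upwards [h1, h2, eventually_ge_atTop (0:ℝ)] with t h1t h2t ht
    intro g hg
    beta_reduce
    have h1g := h1t g hg
    have h2g := h2t g hg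
    simp only [Pi.zero_apply, dist_zero_left] at h1g h2g ⊢
    have hq := Unitary.mem_iff.mp (hqunit t ht)
    have hp1 : ‖p t‖ ≤ 1 := aux_norm_le_one (Unitary.mem_iff.mp (hpunit t ht)).1
    have hqg : star (β g (q t)) * β g (q t) = 1 ∧ β g (q t) * star (β g (q t)) = 1 := by
      constructor
      · rw [← map_star, ← map_mul, hq.1, map_one]
      · rw [← map_star, ← map_mul, hq.2, map_one]
    have hpg : ‖β g (p t)‖ ≤ 1 := by
      apply aux_norm_le_one
      rw [← map_star, ← map_mul, (Unitary.mem_iff.mp (hpunit t ht)).1, map_one]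
    have e : star (β g ((t₁ * 1 * star t₁ + t₂ * q t * star t₂) * p t
          * star (t₁ * 1 * star t₁ + t₂ * q t * star t₂)))
        = (t₁ * 1 * star t₁ + t₂ * β g (q t) * star t₂) * star (β g (p t))
          * star (t₁ * 1 * star t₁ + t₂ * β g (q t) * star t₂) := by
      have hβQ : β g (t₁ * 1 * star t₁ + t₂ * q t * star t₂)
          = t₁ * 1 * star t₁ + t₂ * β g (q t) * star t₂ := by
        simp [map_add, map_mul, map_star, hβt₁, hβt₂]
      rw [map_mul, map_mul, map_star, hβQ, star_mul, star_star, star_mul, ← mul_assoc]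
    calc ‖(t₁ * v g * star t₁ + t₂ * x g * star t₂)
          - ((t₁ * 1 * star t₁ + t₂ * q t * star t₂) * p t
              * star (t₁ * 1 * star t₁ + t₂ * q t * star t₂))
            * (t₁ * u g * star t₁ + t₂ * x g * star t₂)
            * star (β g ((t₁ * 1 * star t₁ + t₂ * q t * star t₂) * p t
              * star (t₁ * 1 * star t₁ + t₂ * q t * star t₂)))‖
        = ‖(t₁ * v g * star t₁ + t₂ * x g * star t₂)
          - ((t₁ * 1 * star t₁ + t₂ * q t * star t₂) * p t
              * star (t₁ * 1 * star t₁ + t₂ * q t * star t₂))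
            * (t₁ * u g * star t₁ + t₂ * x g * star t₂)
            * ((t₁ * 1 * star t₁ + t₂ * β g (q t) * star t₂) * star (β g (p t))
              * star (t₁ * 1 * star t₁ + t₂ * β g (q t) * star t₂))‖ := by rw [e]
      _ ≤ ‖(t₁ * v g * star t₁ + t₂ * w g * star t₂)
            - p t * (t₁ * u g * star t₁ + t₂ * w g * star t₂) * star (β g (p t))‖
          + 2 * ‖x g - q t * w g * star (β g (q t))‖ :=
        aux_master ht₁ ht₂ hO₂ horth12 horth21 (u g) (v g) (x g) (w g)
          (q t) (β g (q t)) (p t) (β g (p t)) hq hqg hp1 hpg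
      _ < ε := by linarith
end

section
/- Let M be a unital C*-algebra, let r₁, r₂ ∈ M be isometries with r₁r₁* + r₂r₂* = 1, and let u ∈ U(M). For t ∈ [0,1] define w_t := (1−t)·1 + t·(r₁ u r₁* + r₂ u* r₂*) + (t(1−t))^{1/2}·( r₂(u* − 1)r₁* − r₁(u − 1)r₂* ). Then w_t is a unitary in M for every t ∈ [0,1], the map t ↦ w_t is norm-continuous, w₀ = 1 and w₁ = r₁ u r₁* + r₂ u* r₂*. Moreover, if B ⊆ M is a two-sided ideal and u − 1 ∈ B, then w_t − 1 ∈ B for every t ∈ [0,1]. -/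
lemma cuntz_aux {M : Type*} [Ring M] [Module ℝ M] [IsScalarTower ℝ M M] [SMulCommClass ℝ M M]
    (a c : ℝ) (A B C : M) (hc : c * c = a * (1 - a))
    (hAB : A * B = 1) (hACCB : A * C = C * B) (hC2 : C * C = A + B - 2) :
    (a • (1 : M) + (1 - a) • A + c • C) * (a • (1 : M) + (1 - a) • B - c • C) = 1 := by
  have h2 : (2 : M) = (2:ℝ) • (1:M) := by
    rw [two_smul]; norm_num
  simp only [add_mul, mul_add, mul_sub, sub_mul, smul_mul_smul_comm, one_mul, mul_one,
    hAB, hACCB, hC2, hc, h2]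
  module

/-- **(Footnote to Proposition 1.11.)** The rotation path connecting the Cuntz
sum `u ⊕ u*` of a unitary with its adjoint to the unit: the explicit path
`w t = (1−t)·1 + t·(r₁ u r₁* + r₂ u* r₂*) + √(t(1−t))·(r₂(u*−1)r₁* − r₁(u−1)r₂*)`
consists of unitaries, is norm-continuous, runs from `1` to `u ⊕ u*`, and stays
in `1 + B` whenever `u ∈ 1 + B`. -/
theorem stmt_13 {M : Type*} [CStarAlgebra M]
    (r₁ r₂ : M) (hr₁ : star r₁ * r₁ = 1) (hr₂ : star r₂ * r₂ = 1)
    (hO₂ : r₁ * star r₁ + r₂ * star r₂ = 1)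
    (u : M) (hu : u ∈ unitary M)
    (w : ℝ → M)
    (hw : ∀ t : ℝ, w t =
      (1 - t) • (1 : M) + t • (r₁ * u * star r₁ + r₂ * star u * star r₂) +
        Real.sqrt (t * (1 - t)) •
          (r₂ * (star u - 1) * star r₁ - r₁ * (u - 1) * star r₂)) :
    (∀ t ∈ Set.Icc (0 : ℝ) 1, w t ∈ unitary M) ∧
      ContinuousOn w (Set.Icc (0 : ℝ) 1) ∧
      w 0 = 1 ∧
      w 1 = r₁ * u * star r₁ + r₂ * star u * star r₂ ∧
      ∀ B : TwoSidedIdeal M, u - 1 ∈ B → ∀ t ∈ Set.Icc (0 : ℝ) 1, w t - 1 ∈ B := by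
  have hu1 : star u * u = 1 := hu.1
  have hu2 : u * star u = 1 := hu.2
  -- orthogonality of the range projections
  have e11 : ∀ x : M, star r₁ * (r₁ * x) = x := fun x => by rw [← mul_assoc, hr₁, one_mul]
  have e22 : ∀ x : M, star r₂ * (r₂ * x) = x := fun x => by rw [← mul_assoc, hr₂, one_mul]
  have h12 : star r₁ * r₂ = 0 := by
    have h : star r₁ * ((r₁ * star r₁ + r₂ * star r₂) * r₂) = star r₁ * r₂ := by
      rw [hO₂, one_mul]
    have h' : star r₁ * ((r₁ * star r₁ + r₂ * star r₂) * r₂)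
        = star r₁ * r₂ + star r₁ * r₂ := by
      simp only [add_mul, mul_add, mul_assoc, e11, e22, hr₁, hr₂, mul_one]
    have h2 := h'.symm.trans h
    exact (add_eq_left).mp h2
  have h21 : star r₂ * r₁ = 0 := by
    have := congrArg star h12
    simpa [star_mul] using this
  have e12 : ∀ x : M, star r₁ * (r₂ * x) = 0 := fun x => by rw [← mul_assoc, h12, zero_mul]
  have e21 : ∀ x : M, star r₂ * (r₁ * x) = 0 := fun x => by rw [← mul_assoc, h21, zero_mul]
  have f1 : ∀ x : M, u * (star u * x) = x := fun x => by rw [← mul_assoc, hu2, one_mul]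
  have f2 : ∀ x : M, star u * (u * x) = x := fun x => by rw [← mul_assoc, hu1, one_mul]
  set A := r₁ * u * star r₁ + r₂ * star u * star r₂ with hA_def
  set C := r₂ * (star u - 1) * star r₁ - r₁ * (u - 1) * star r₂ with hC_def
  have hstarA : star A = r₁ * star u * star r₁ + r₂ * u * star r₂ := by
    simp [hA_def, star_mul, mul_assoc, add_comm]
  have hstarC : star C = -C := by
    simp only [hC_def, star_sub, star_mul, star_one, star_star]
    rw [neg_sub]
    congr 1 <;> simp [mul_assoc]
  have hAB : A * star A = 1 := by
    rw [hstarA]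
    simp only [hA_def, add_mul, mul_add, mul_assoc, e11, e22, e12, e21,
      f1, f2, mul_zero, add_zero, zero_add]
    exact hO₂
  have hBA : star A * A = 1 := by
    rw [hstarA]
    simp only [hA_def, add_mul, mul_add, mul_assoc, e11, e22, e12, e21,
      f1, f2, mul_zero, add_zero, zero_add]
    exact hO₂
  have hAC : A * C = C * star A := by
    rw [hstarA]
    simp only [hA_def, hC_def, add_mul, mul_add, mul_sub, sub_mul, mul_assoc,
      e11, e22, e12, e21, f1, f2, mul_zero, zero_mul, add_zero, zero_add,
      sub_zero, zero_sub, mul_one, one_mul]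
    noncomm_ring
  have hBC : star A * C = C * A := by
    rw [hstarA]
    simp only [hA_def, hC_def, add_mul, mul_add, mul_sub, sub_mul, mul_assoc,
      e11, e22, e12, e21, f1, f2, mul_zero, zero_mul, add_zero, zero_add,
      sub_zero, zero_sub, mul_one, one_mul]
    noncomm_ring
  have hC2 : C * C = A + star A - 2 := by
    rw [hstarA]
    have expand : C * C = (r₁ * u * star r₁ + r₂ * star u * star r₂)
        + (r₁ * star u * star r₁ + r₂ * u * star r₂)
        - (r₁ * star r₁ + r₂ * star r₂) - (r₁ * star r₁ + r₂ * star r₂) := by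
      simp only [hA_def, hC_def, add_mul, mul_add, mul_sub, sub_mul, mul_assoc,
        e11, e22, e12, e21, f1, f2, mul_zero, zero_mul, add_zero, zero_add,
        sub_zero, zero_sub, mul_one, one_mul]
      noncomm_ring
    rw [expand, hO₂, hA_def, sub_sub, one_add_one_eq_two]
  -- unitarity on [0,1]
  have hunit : ∀ t ∈ Set.Icc (0 : ℝ) 1, w t ∈ unitary M := by
    intro t ht
    obtain ⟨ht0, ht1⟩ := ht
    set s := Real.sqrt (t * (1 - t)) with hs_def
    have hs : s * s = (1 - t) * (1 - (1 - t)) := by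
      rw [hs_def, Real.mul_self_sqrt (by nlinarith : (0:ℝ) ≤ t * (1 - t))]
      ring
    have h1t : 1 - (1 - t) = t := by ring
    have hwt : w t = (1 - t) • (1 : M) + (1 - (1 - t)) • A + s • C := by
      rw [hw t, h1t, ← hs_def]
    constructor
    · -- star (w t) * w t = 1
      have hstar : star (w t) = (1 - t) • (1 : M) + (1 - (1 - t)) • star A + s • (-C) := by
        rw [hwt]
        simp [hstarC]
      rw [hstar, show w t = (1 - t) • (1 : M) + (1 - (1 - t)) • A - s • (-C) by
        rw [hwt]; simp]
      exact cuntz_aux (1 - t) s (star A) A (-C) hs hBA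
        (by rw [mul_neg, neg_mul, hBC]) (by rw [neg_mul_neg, hC2]; abel)
    · -- w t * star (w t) = 1
      have hstar : star (w t) = (1 - t) • (1 : M) + (1 - (1 - t)) • star A - s • C := by
        rw [hwt]
        simp [hstarC]
        abel
      rw [hstar, hwt]
      exact cuntz_aux (1 - t) s A (star A) C hs hAB hAC hC2
  refine ⟨hunit, ?_, ?_, ?_, ?_⟩
  · -- continuity
    have : Continuous w := by
      have : w = fun t : ℝ =>
          (1 - t) • (1 : M) + t • A + Real.sqrt (t * (1 - t)) • C := funext hw
      rw [this]
      fun_prop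
    exact this.continuousOn
  · simp [hw 0]
  · simp [hw 1]
  · intro B hB t ht
    have hu' : star u - 1 ∈ B := by
      have : star u - 1 = -(star u * (u - 1)) := by
        rw [mul_sub, hu1, mul_one, neg_sub]
      rw [this]
      exact B.neg_mem (B.mul_mem_left _ _ hB)
    have hA1 : A - 1 ∈ B := by
      have : A - 1 = r₁ * ((u - 1) * star r₁) + r₂ * ((star u - 1) * star r₂) := by
        conv_lhs => rw [hA_def, ← hO₂]
        noncomm_ring
      rw [this]
      exact B.add_mem (B.mul_mem_left _ _ (B.mul_mem_right _ _ hB))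
        (B.mul_mem_left _ _ (B.mul_mem_right _ _ hu'))
    have hCB : C ∈ B := by
      rw [hC_def]
      exact B.sub_mem
        (by rw [mul_assoc]; exact B.mul_mem_left _ _ (B.mul_mem_right _ _ hu'))
        (by rw [mul_assoc]; exact B.mul_mem_left _ _ (B.mul_mem_right _ _ hB))
    have hsmul : ∀ (c : ℝ) (x : M), x ∈ B → c • x ∈ B := by
      intro c x hx
      have : c • x = (c • (1 : M)) * x := by rw [smul_mul_assoc, one_mul]
      rw [this]
      exact B.mul_mem_left _ _ hx
    have : w t - 1 = t • (A - 1) + Real.sqrt (t * (1 - t)) • C := by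
      rw [hw t]
      module
    rw [this]
    exact B.add_mem (hsmul _ _ hA1) (hsmul _ _ hCB)
end
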